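/- Let d > 2 be prime and let (M,b) be a linear constraint system over ℤ_d of magic-pentagram form: variables x_1,…,x_10 with constraints a_1x_1+a_2x_2+a_3x_3+a_4x_4=b_1, a_1'x_1+a_5x_5+a_6x_6+a_7x_7=b_2, a_2'x_2+a_5'x_5+a_8x_8+a_9x_9=b_3, a_3'x_3+a_6'x_6+a_8'x_8+a_{10}x_{10}=b_4, a_4'x_4+a_7'x_7+a_9'x_9+a_{10}'x_{10}=b_5, where all coefficients a_i, a_i' are nonzero elements of ℤ_d. Then (M,b) admits a quantum solution on some nonzero complex Hilbert space if and only if it has a classical solution. -/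

import Mathlib

/-- ω = exp(2πi/d). -/
noncomputable def rootOfUnity (d : ℕ) : ℂ := Complex.exp (2 * Real.pi * Complex.I / d)

/-- A quantum solution to the linear constraint system `(M, b)` over `ℤ_d` on a complex
Hilbert space `H`: bounded operators `A i` with `A i ^ d = 1`, commuting whenever two
variables appear in a common constraint, and with `∏ j, A j ^ M i j = ω ^ b i • 1` for
every row `i`. -/
def IsQuantumSolution (d : ℕ) {m n : ℕ} (M : Matrix (Fin m) (Fin n) (ZMod d))
    (b : Fin m → ZMod d) {H : Type} [NormedAddCommGroup H] [InnerProductSpace ℂ H]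
    (A : Fin n → H →L[ℂ] H) : Prop :=
  (∀ i, A i ^ d = 1) ∧
  (∀ j k : Fin n, (∃ i, M i j ≠ 0 ∧ M i k ≠ 0) → Commute (A j) (A k)) ∧
  (∀ i : Fin m, (List.ofFn fun j => A j ^ (M i j).val).prod
      = rootOfUnity d ^ (b i).val • (1 : H →L[ℂ] H))

/-- `(M,b)` admits a quantum solution on some nonzero complex Hilbert space. -/
def HasQuantumSolution (d : ℕ) {m n : ℕ} (M : Matrix (Fin m) (Fin n) (ZMod d))
    (b : Fin m → ZMod d) : Prop :=
  ∃ (H : Type) (_ : NormedAddCommGroup H) (_ : InnerProductSpace ℂ H)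
    (_ : CompleteSpace H) (_ : Nontrivial H) (A : Fin n → H →L[ℂ] H),
    IsQuantumSolution d M b A

/-- The defining relations of the solution group of the LCS `(M,b)` over `ℤ_d`, on the
generators `none = J` and `some i = gᵢ`:  `J^d = gᵢ^d = e`, `J` is central,
`g_j g_k = g_k g_j` whenever variables `j,k` share a constraint, and
`J^{-bᵢ} ∏_j g_j^{M i j} = e` for every row `i`. -/
def lcsRels (d : ℕ) {m n : ℕ} (M : Matrix (Fin m) (Fin n) (ZMod d)) (b : Fin m → ZMod d) :
    Set (FreeGroup (Option (Fin n))) :=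
  {w | (∃ x : Option (Fin n), w = FreeGroup.of x ^ d) ∨
    (∃ i : Fin n, w = FreeGroup.of (none : Option (Fin n)) * FreeGroup.of (some i) *
        (FreeGroup.of (none : Option (Fin n)))⁻¹ * (FreeGroup.of (some i))⁻¹) ∨
    (∃ j k : Fin n, (∃ i, M i j ≠ 0 ∧ M i k ≠ 0) ∧
        w = FreeGroup.of (some j) * FreeGroup.of (some k) *
          (FreeGroup.of (some j))⁻¹ * (FreeGroup.of (some k))⁻¹) ∨
    (∃ i : Fin m, w = (FreeGroup.of (none : Option (Fin n)) ^ (b i).val)⁻¹ *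
        (List.ofFn fun j => FreeGroup.of (some j) ^ (M i j).val).prod)}

/-- The solution group `𝒢(M,b)`; `PresentedGroup.of none` is `J` and
`PresentedGroup.of (some i)` is the generator `gᵢ`. -/
abbrev SolutionGroup (d : ℕ) {m n : ℕ} (M : Matrix (Fin m) (Fin n) (ZMod d))
    (b : Fin m → ZMod d) := PresentedGroup (lcsRels d M b)

/-- The coefficient matrix of the generalized magic pentagram LCS: rows are the
constraints `a₁x₁+a₂x₂+a₃x₃+a₄x₄ = b₁`, `a₁'x₁+a₅x₅+a₆x₆+a₇x₇ = b₂`,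
`a₂'x₂+a₅'x₅+a₈x₈+a₉x₉ = b₃`, `a₃'x₃+a₆'x₆+a₈'x₈+a₁₀x₁₀ = b₄`,
`a₄'x₄+a₇'x₇+a₉'x₉+a₁₀'x₁₀ = b₅`. -/
def magicPentagramMatrix {d : ℕ} (a a' : Fin 10 → ZMod d) :
    Matrix (Fin 5) (Fin 10) (ZMod d) :=
  Matrix.of
    ![![a 0, a 1, a 2, a 3, 0, 0, 0, 0, 0, 0],
      ![a' 0, 0, 0, 0, a 4, a 5, a 6, 0, 0, 0],
      ![0, a' 1, 0, 0, a' 4, 0, 0, a 7, a 8, 0],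
      ![0, 0, a' 2, 0, 0, a' 5, 0, a' 7, 0, a 9],
      ![0, 0, 0, a' 3, 0, 0, a' 6, 0, a' 8, a' 9]]

section MagicPentagramProof

private lemma mcr {M : Type*} [Monoid M] (a : M) {x y : M} (h : x = y) : a * x = a * y := by rw [h]
private lemma sw {M : Type*} [Monoid M] {x y : M} (h : Commute x y) (r : M) :
    x * (y * r) = y * (x * r) := by rw [← mul_assoc, h.eq, mul_assoc]
private lemma sw2 {M : Type*} [Monoid M] {x y : M} (h : Commute x y) : x * y = y * x := h.eq
private lemma cn {M : Type*} [Monoid M] {x y : M} (h : x * y = 1) (r : M) :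
    x * (y * r) = r := by rw [← mul_assoc, h, one_mul]
private lemma cne {M : Type*} [Monoid M] {x y : M} (h : x * y = 1) (a : M) :
    a * (x * y) = a := by rw [h, mul_one]

private lemma pow4 {E : Type*} [Monoid E] {w x z t : E} (n : ℕ)
    (hwx : Commute w x) (hwz : Commute w z) (hwt : Commute w t)
    (hxz : Commute x z) (hxt : Commute x t) (hzt : Commute z t) :
    (w * (x * (z * t))) ^ n = w ^ n * (x ^ n * (z ^ n * t ^ n)) := by
  rw [Commute.mul_pow (hwx.mul_right (hwz.mul_right hwt)),
      Commute.mul_pow (hxz.mul_right hxt), Commute.mul_pow hzt]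

set_option maxHeartbeats 4000000 in
private lemma pentagram_core {E : Type*} [Monoid E] (p : Fin 5 → Fin 5 → E) (c : Fin 5 → E)
    (hcan : ∀ u v : Fin 5, u ≠ v → p u v * p v u = 1)
    (hcomm : ∀ u v u' v' : Fin 5, u ≠ v → u' ≠ v' →
      (u = u' ∨ u = v' ∨ v = u' ∨ v = v') → Commute (p u v) (p u' v'))
    (hc : ∀ (u : Fin 5) (g : E), Commute (c u) g)
    (h0 : p 0 1 * (p 0 2 * (p 0 3 * p 0 4)) = c 0)
    (h1 : p 1 0 * (p 1 2 * (p 1 3 * p 1 4)) = c 1)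
    (h2 : p 2 0 * (p 2 1 * (p 2 3 * p 2 4)) = c 2)
    (h3 : p 3 0 * (p 3 1 * (p 3 2 * p 3 4)) = c 3)
    (h4 : p 4 0 * (p 4 1 * (p 4 2 * p 4 3)) = c 4) :
    c 0 * (c 1 * (c 2 * (c 3 * (c 4 * (c 0 * (c 1 * (c 2 * (c 3 * (c 4))))))))) = 1 := by
  have I1 : p 3 0 * (p 3 1 * (p 3 2 * (p 3 4 * (p 0 3 * (p 1 3 * (p 2 3)))))) = p 3 4 := by
    calc p 3 0 * (p 3 1 * (p 3 2 * (p 3 4 * (p 0 3 * (p 1 3 * (p 2 3))))))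
      _ = p 3 0 * (p 3 1 * (p 3 2 * (p 0 3 * (p 3 4 * (p 1 3 * (p 2 3)))))) := mcr (p 3 0) (mcr (p 3 1) (mcr (p 3 2) (sw (hcomm 3 4 0 3 (by decide) (by decide) (by decide)) (p 1 3 * (p 2 3)))))
      _ = p 3 0 * (p 3 1 * (p 0 3 * (p 3 2 * (p 3 4 * (p 1 3 * (p 2 3)))))) := mcr (p 3 0) (mcr (p 3 1) (sw (hcomm 3 2 0 3 (by decide) (by decide) (by decide)) (p 3 4 * (p 1 3 * (p 2 3)))))
      _ = p 3 0 * (p 0 3 * (p 3 1 * (p 3 2 * (p 3 4 * (p 1 3 * (p 2 3)))))) := mcr (p 3 0) (sw (hcomm 3 1 0 3 (by decide) (by decide) (by decide)) (p 3 2 * (p 3 4 * (p 1 3 * (p 2 3)))))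
      _ = p 3 1 * (p 3 2 * (p 3 4 * (p 1 3 * (p 2 3)))) := cn (hcan 3 0 (by decide)) (p 3 1 * (p 3 2 * (p 3 4 * (p 1 3 * (p 2 3)))))
      _ = p 3 1 * (p 3 2 * (p 1 3 * (p 3 4 * (p 2 3)))) := mcr (p 3 1) (mcr (p 3 2) (sw (hcomm 3 4 1 3 (by decide) (by decide) (by decide)) (p 2 3)))
      _ = p 3 1 * (p 1 3 * (p 3 2 * (p 3 4 * (p 2 3)))) := mcr (p 3 1) (sw (hcomm 3 2 1 3 (by decide) (by decide) (by decide)) (p 3 4 * (p 2 3)))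
      _ = p 3 2 * (p 3 4 * (p 2 3)) := cn (hcan 3 1 (by decide)) (p 3 2 * (p 3 4 * (p 2 3)))
      _ = p 3 2 * (p 2 3 * (p 3 4)) := mcr (p 3 2) (sw2 (hcomm 3 4 2 3 (by decide) (by decide) (by decide)))
      _ = p 3 4 := cn (hcan 3 2 (by decide)) (p 3 4)
  have I2 : p 4 0 * (p 4 1 * (p 4 2 * (p 4 3 * (p 0 4 * (p 1 4 * (p 2 4)))))) = p 4 3 := by
    calc p 4 0 * (p 4 1 * (p 4 2 * (p 4 3 * (p 0 4 * (p 1 4 * (p 2 4))))))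
      _ = p 4 0 * (p 4 1 * (p 4 2 * (p 0 4 * (p 4 3 * (p 1 4 * (p 2 4)))))) := mcr (p 4 0) (mcr (p 4 1) (mcr (p 4 2) (sw (hcomm 4 3 0 4 (by decide) (by decide) (by decide)) (p 1 4 * (p 2 4)))))
      _ = p 4 0 * (p 4 1 * (p 0 4 * (p 4 2 * (p 4 3 * (p 1 4 * (p 2 4)))))) := mcr (p 4 0) (mcr (p 4 1) (sw (hcomm 4 2 0 4 (by decide) (by decide) (by decide)) (p 4 3 * (p 1 4 * (p 2 4)))))
      _ = p 4 0 * (p 0 4 * (p 4 1 * (p 4 2 * (p 4 3 * (p 1 4 * (p 2 4)))))) := mcr (p 4 0) (sw (hcomm 4 1 0 4 (by decide) (by decide) (by decide)) (p 4 2 * (p 4 3 * (p 1 4 * (p 2 4)))))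
      _ = p 4 1 * (p 4 2 * (p 4 3 * (p 1 4 * (p 2 4)))) := cn (hcan 4 0 (by decide)) (p 4 1 * (p 4 2 * (p 4 3 * (p 1 4 * (p 2 4)))))
      _ = p 4 1 * (p 4 2 * (p 1 4 * (p 4 3 * (p 2 4)))) := mcr (p 4 1) (mcr (p 4 2) (sw (hcomm 4 3 1 4 (by decide) (by decide) (by decide)) (p 2 4)))
      _ = p 4 1 * (p 1 4 * (p 4 2 * (p 4 3 * (p 2 4)))) := mcr (p 4 1) (sw (hcomm 4 2 1 4 (by decide) (by decide) (by decide)) (p 4 3 * (p 2 4)))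
      _ = p 4 2 * (p 4 3 * (p 2 4)) := cn (hcan 4 1 (by decide)) (p 4 2 * (p 4 3 * (p 2 4)))
      _ = p 4 2 * (p 2 4 * (p 4 3)) := mcr (p 4 2) (sw2 (hcomm 4 3 2 4 (by decide) (by decide) (by decide)))
      _ = p 4 3 := cn (hcan 4 2 (by decide)) (p 4 3)
  have I4 : p 3 0 * (p 2 0 * (p 1 0 * (p 0 1 * (p 0 2 * (p 0 3 * (p 0 4)))))) = p 0 4 := by
    calc p 3 0 * (p 2 0 * (p 1 0 * (p 0 1 * (p 0 2 * (p 0 3 * (p 0 4))))))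
      _ = p 3 0 * (p 2 0 * (p 1 0 * (p 0 1 * (p 0 3 * (p 0 2 * (p 0 4)))))) := mcr (p 3 0) (mcr (p 2 0) (mcr (p 1 0) (mcr (p 0 1) (sw (hcomm 0 2 0 3 (by decide) (by decide) (by decide)) (p 0 4)))))
      _ = p 3 0 * (p 2 0 * (p 1 0 * (p 0 3 * (p 0 1 * (p 0 2 * (p 0 4)))))) := mcr (p 3 0) (mcr (p 2 0) (mcr (p 1 0) (sw (hcomm 0 1 0 3 (by decide) (by decide) (by decide)) (p 0 2 * (p 0 4)))))
      _ = p 3 0 * (p 2 0 * (p 0 3 * (p 1 0 * (p 0 1 * (p 0 2 * (p 0 4)))))) := mcr (p 3 0) (mcr (p 2 0) (sw (hcomm 1 0 0 3 (by decide) (by decide) (by decide)) (p 0 1 * (p 0 2 * (p 0 4)))))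
      _ = p 3 0 * (p 0 3 * (p 2 0 * (p 1 0 * (p 0 1 * (p 0 2 * (p 0 4)))))) := mcr (p 3 0) (sw (hcomm 2 0 0 3 (by decide) (by decide) (by decide)) (p 1 0 * (p 0 1 * (p 0 2 * (p 0 4)))))
      _ = p 2 0 * (p 1 0 * (p 0 1 * (p 0 2 * (p 0 4)))) := cn (hcan 3 0 (by decide)) (p 2 0 * (p 1 0 * (p 0 1 * (p 0 2 * (p 0 4)))))
      _ = p 2 0 * (p 1 0 * (p 0 2 * (p 0 1 * (p 0 4)))) := mcr (p 2 0) (mcr (p 1 0) (sw (hcomm 0 1 0 2 (by decide) (by decide) (by decide)) (p 0 4)))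
      _ = p 2 0 * (p 0 2 * (p 1 0 * (p 0 1 * (p 0 4)))) := mcr (p 2 0) (sw (hcomm 1 0 0 2 (by decide) (by decide) (by decide)) (p 0 1 * (p 0 4)))
      _ = p 1 0 * (p 0 1 * (p 0 4)) := cn (hcan 2 0 (by decide)) (p 1 0 * (p 0 1 * (p 0 4)))
      _ = p 0 4 := cn (hcan 1 0 (by decide)) (p 0 4)
  have I5 : p 3 1 * (p 0 1 * (p 2 1 * (p 1 0 * (p 1 2 * (p 1 3 * (p 1 4)))))) = p 1 4 := by
    calc p 3 1 * (p 0 1 * (p 2 1 * (p 1 0 * (p 1 2 * (p 1 3 * (p 1 4))))))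
      _ = p 3 1 * (p 0 1 * (p 2 1 * (p 1 0 * (p 1 3 * (p 1 2 * (p 1 4)))))) := mcr (p 3 1) (mcr (p 0 1) (mcr (p 2 1) (mcr (p 1 0) (sw (hcomm 1 2 1 3 (by decide) (by decide) (by decide)) (p 1 4)))))
      _ = p 3 1 * (p 0 1 * (p 2 1 * (p 1 3 * (p 1 0 * (p 1 2 * (p 1 4)))))) := mcr (p 3 1) (mcr (p 0 1) (mcr (p 2 1) (sw (hcomm 1 0 1 3 (by decide) (by decide) (by decide)) (p 1 2 * (p 1 4)))))
      _ = p 3 1 * (p 0 1 * (p 1 3 * (p 2 1 * (p 1 0 * (p 1 2 * (p 1 4)))))) := mcr (p 3 1) (mcr (p 0 1) (sw (hcomm 2 1 1 3 (by decide) (by decide) (by decide)) (p 1 0 * (p 1 2 * (p 1 4)))))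
      _ = p 3 1 * (p 1 3 * (p 0 1 * (p 2 1 * (p 1 0 * (p 1 2 * (p 1 4)))))) := mcr (p 3 1) (sw (hcomm 0 1 1 3 (by decide) (by decide) (by decide)) (p 2 1 * (p 1 0 * (p 1 2 * (p 1 4)))))
      _ = p 0 1 * (p 2 1 * (p 1 0 * (p 1 2 * (p 1 4)))) := cn (hcan 3 1 (by decide)) (p 0 1 * (p 2 1 * (p 1 0 * (p 1 2 * (p 1 4)))))
      _ = p 0 1 * (p 1 0 * (p 2 1 * (p 1 2 * (p 1 4)))) := mcr (p 0 1) (sw (hcomm 2 1 1 0 (by decide) (by decide) (by decide)) (p 1 2 * (p 1 4)))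
      _ = p 2 1 * (p 1 2 * (p 1 4)) := cn (hcan 0 1 (by decide)) (p 2 1 * (p 1 2 * (p 1 4)))
      _ = p 1 4 := cn (hcan 2 1 (by decide)) (p 1 4)
  have I5' : p 3 1 * (p 2 1 * (p 0 1 * (p 1 0 * (p 1 2 * (p 1 3 * (p 1 4)))))) = p 1 4 := by
    calc p 3 1 * (p 2 1 * (p 0 1 * (p 1 0 * (p 1 2 * (p 1 3 * (p 1 4))))))
      _ = p 3 1 * (p 2 1 * (p 0 1 * (p 1 0 * (p 1 3 * (p 1 2 * (p 1 4)))))) := mcr (p 3 1) (mcr (p 2 1) (mcr (p 0 1) (mcr (p 1 0) (sw (hcomm 1 2 1 3 (by decide) (by decide) (by decide)) (p 1 4)))))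
      _ = p 3 1 * (p 2 1 * (p 0 1 * (p 1 3 * (p 1 0 * (p 1 2 * (p 1 4)))))) := mcr (p 3 1) (mcr (p 2 1) (mcr (p 0 1) (sw (hcomm 1 0 1 3 (by decide) (by decide) (by decide)) (p 1 2 * (p 1 4)))))
      _ = p 3 1 * (p 2 1 * (p 1 3 * (p 0 1 * (p 1 0 * (p 1 2 * (p 1 4)))))) := mcr (p 3 1) (mcr (p 2 1) (sw (hcomm 0 1 1 3 (by decide) (by decide) (by decide)) (p 1 0 * (p 1 2 * (p 1 4)))))
      _ = p 3 1 * (p 1 3 * (p 2 1 * (p 0 1 * (p 1 0 * (p 1 2 * (p 1 4)))))) := mcr (p 3 1) (sw (hcomm 2 1 1 3 (by decide) (by decide) (by decide)) (p 0 1 * (p 1 0 * (p 1 2 * (p 1 4)))))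
      _ = p 2 1 * (p 0 1 * (p 1 0 * (p 1 2 * (p 1 4)))) := cn (hcan 3 1 (by decide)) (p 2 1 * (p 0 1 * (p 1 0 * (p 1 2 * (p 1 4)))))
      _ = p 2 1 * (p 0 1 * (p 1 2 * (p 1 0 * (p 1 4)))) := mcr (p 2 1) (mcr (p 0 1) (sw (hcomm 1 0 1 2 (by decide) (by decide) (by decide)) (p 1 4)))
      _ = p 2 1 * (p 1 2 * (p 0 1 * (p 1 0 * (p 1 4)))) := mcr (p 2 1) (sw (hcomm 0 1 1 2 (by decide) (by decide) (by decide)) (p 1 0 * (p 1 4)))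
      _ = p 0 1 * (p 1 0 * (p 1 4)) := cn (hcan 2 1 (by decide)) (p 0 1 * (p 1 0 * (p 1 4)))
      _ = p 1 4 := cn (hcan 0 1 (by decide)) (p 1 4)
  have I6 : p 3 2 * (p 0 2 * (p 1 2 * (p 2 0 * (p 2 1 * (p 2 3 * (p 2 4)))))) = p 2 4 := by
    calc p 3 2 * (p 0 2 * (p 1 2 * (p 2 0 * (p 2 1 * (p 2 3 * (p 2 4))))))
      _ = p 3 2 * (p 0 2 * (p 1 2 * (p 2 0 * (p 2 3 * (p 2 1 * (p 2 4)))))) := mcr (p 3 2) (mcr (p 0 2) (mcr (p 1 2) (mcr (p 2 0) (sw (hcomm 2 1 2 3 (by decide) (by decide) (by decide)) (p 2 4)))))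
      _ = p 3 2 * (p 0 2 * (p 1 2 * (p 2 3 * (p 2 0 * (p 2 1 * (p 2 4)))))) := mcr (p 3 2) (mcr (p 0 2) (mcr (p 1 2) (sw (hcomm 2 0 2 3 (by decide) (by decide) (by decide)) (p 2 1 * (p 2 4)))))
      _ = p 3 2 * (p 0 2 * (p 2 3 * (p 1 2 * (p 2 0 * (p 2 1 * (p 2 4)))))) := mcr (p 3 2) (mcr (p 0 2) (sw (hcomm 1 2 2 3 (by decide) (by decide) (by decide)) (p 2 0 * (p 2 1 * (p 2 4)))))
      _ = p 3 2 * (p 2 3 * (p 0 2 * (p 1 2 * (p 2 0 * (p 2 1 * (p 2 4)))))) := mcr (p 3 2) (sw (hcomm 0 2 2 3 (by decide) (by decide) (by decide)) (p 1 2 * (p 2 0 * (p 2 1 * (p 2 4)))))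
      _ = p 0 2 * (p 1 2 * (p 2 0 * (p 2 1 * (p 2 4)))) := cn (hcan 3 2 (by decide)) (p 0 2 * (p 1 2 * (p 2 0 * (p 2 1 * (p 2 4)))))
      _ = p 0 2 * (p 2 0 * (p 1 2 * (p 2 1 * (p 2 4)))) := mcr (p 0 2) (sw (hcomm 1 2 2 0 (by decide) (by decide) (by decide)) (p 2 1 * (p 2 4)))
      _ = p 1 2 * (p 2 1 * (p 2 4)) := cn (hcan 0 2 (by decide)) (p 1 2 * (p 2 1 * (p 2 4)))
      _ = p 2 4 := cn (hcan 1 2 (by decide)) (p 2 4)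
  have I7 : p 0 3 * (p 1 3 * (p 2 3 * (p 3 0 * (p 2 0 * (p 1 0 * (p 3 1 * (p 0 1 * (p 2 1 * (p 3 2 * (p 0 2 * (p 1 2))))))))))) = p 1 3 * (p 2 0 * (p 3 1 * (p 0 2))) := by
    calc p 0 3 * (p 1 3 * (p 2 3 * (p 3 0 * (p 2 0 * (p 1 0 * (p 3 1 * (p 0 1 * (p 2 1 * (p 3 2 * (p 0 2 * (p 1 2)))))))))))
      _ = p 0 3 * (p 1 3 * (p 3 0 * (p 2 3 * (p 2 0 * (p 1 0 * (p 3 1 * (p 0 1 * (p 2 1 * (p 3 2 * (p 0 2 * (p 1 2))))))))))) := mcr (p 0 3) (mcr (p 1 3) (sw (hcomm 2 3 3 0 (by decide) (by decide) (by decide)) (p 2 0 * (p 1 0 * (p 3 1 * (p 0 1 * (p 2 1 * (p 3 2 * (p 0 2 * (p 1 2))))))))))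
      _ = p 0 3 * (p 3 0 * (p 1 3 * (p 2 3 * (p 2 0 * (p 1 0 * (p 3 1 * (p 0 1 * (p 2 1 * (p 3 2 * (p 0 2 * (p 1 2))))))))))) := mcr (p 0 3) (sw (hcomm 1 3 3 0 (by decide) (by decide) (by decide)) (p 2 3 * (p 2 0 * (p 1 0 * (p 3 1 * (p 0 1 * (p 2 1 * (p 3 2 * (p 0 2 * (p 1 2))))))))))
      _ = p 1 3 * (p 2 3 * (p 2 0 * (p 1 0 * (p 3 1 * (p 0 1 * (p 2 1 * (p 3 2 * (p 0 2 * (p 1 2))))))))) := cn (hcan 0 3 (by decide)) (p 1 3 * (p 2 3 * (p 2 0 * (p 1 0 * (p 3 1 * (p 0 1 * (p 2 1 * (p 3 2 * (p 0 2 * (p 1 2))))))))))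
      _ = p 1 3 * (p 2 3 * (p 2 0 * (p 1 0 * (p 0 1 * (p 3 1 * (p 2 1 * (p 3 2 * (p 0 2 * (p 1 2))))))))) := mcr (p 1 3) (mcr (p 2 3) (mcr (p 2 0) (mcr (p 1 0) (sw (hcomm 3 1 0 1 (by decide) (by decide) (by decide)) (p 2 1 * (p 3 2 * (p 0 2 * (p 1 2))))))))
      _ = p 1 3 * (p 2 3 * (p 2 0 * (p 3 1 * (p 2 1 * (p 3 2 * (p 0 2 * (p 1 2))))))) := mcr (p 1 3) (mcr (p 2 3) (mcr (p 2 0) (cn (hcan 1 0 (by decide)) (p 3 1 * (p 2 1 * (p 3 2 * (p 0 2 * (p 1 2))))))))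
      _ = p 1 3 * (p 2 3 * (p 2 0 * (p 3 1 * (p 3 2 * (p 2 1 * (p 0 2 * (p 1 2))))))) := mcr (p 1 3) (mcr (p 2 3) (mcr (p 2 0) (mcr (p 3 1) (sw (hcomm 2 1 3 2 (by decide) (by decide) (by decide)) (p 0 2 * (p 1 2))))))
      _ = p 1 3 * (p 2 3 * (p 2 0 * (p 3 2 * (p 3 1 * (p 2 1 * (p 0 2 * (p 1 2))))))) := mcr (p 1 3) (mcr (p 2 3) (mcr (p 2 0) (sw (hcomm 3 1 3 2 (by decide) (by decide) (by decide)) (p 2 1 * (p 0 2 * (p 1 2))))))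
      _ = p 1 3 * (p 2 3 * (p 3 2 * (p 2 0 * (p 3 1 * (p 2 1 * (p 0 2 * (p 1 2))))))) := mcr (p 1 3) (mcr (p 2 3) (sw (hcomm 2 0 3 2 (by decide) (by decide) (by decide)) (p 3 1 * (p 2 1 * (p 0 2 * (p 1 2))))))
      _ = p 1 3 * (p 2 0 * (p 3 1 * (p 2 1 * (p 0 2 * (p 1 2))))) := mcr (p 1 3) (cn (hcan 2 3 (by decide)) (p 2 0 * (p 3 1 * (p 2 1 * (p 0 2 * (p 1 2))))))
      _ = p 1 3 * (p 2 0 * (p 3 1 * (p 2 1 * (p 1 2 * (p 0 2))))) := mcr (p 1 3) (mcr (p 2 0) (mcr (p 3 1) (mcr (p 2 1) (sw2 (hcomm 0 2 1 2 (by decide) (by decide) (by decide))))))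
      _ = p 1 3 * (p 2 0 * (p 3 1 * (p 0 2))) := mcr (p 1 3) (mcr (p 2 0) (mcr (p 3 1) (cn (hcan 2 1 (by decide)) (p 0 2))))
  have I8 : p 0 3 * (p 1 3 * (p 2 3 * (p 3 2 * (p 0 2 * (p 1 2 * (p 3 1 * (p 2 1 * (p 0 1 * (p 3 0 * (p 2 0 * (p 1 0))))))))))) = p 1 3 * (p 0 2 * (p 3 1 * (p 2 0))) := by
    calc p 0 3 * (p 1 3 * (p 2 3 * (p 3 2 * (p 0 2 * (p 1 2 * (p 3 1 * (p 2 1 * (p 0 1 * (p 3 0 * (p 2 0 * (p 1 0)))))))))))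
      _ = p 0 3 * (p 1 3 * (p 0 2 * (p 1 2 * (p 3 1 * (p 2 1 * (p 0 1 * (p 3 0 * (p 2 0 * (p 1 0))))))))) := mcr (p 0 3) (mcr (p 1 3) (cn (hcan 2 3 (by decide)) (p 0 2 * (p 1 2 * (p 3 1 * (p 2 1 * (p 0 1 * (p 3 0 * (p 2 0 * (p 1 0))))))))))
      _ = p 0 3 * (p 1 3 * (p 0 2 * (p 1 2 * (p 2 1 * (p 3 1 * (p 0 1 * (p 3 0 * (p 2 0 * (p 1 0))))))))) := mcr (p 0 3) (mcr (p 1 3) (mcr (p 0 2) (mcr (p 1 2) (sw (hcomm 3 1 2 1 (by decide) (by decide) (by decide)) (p 0 1 * (p 3 0 * (p 2 0 * (p 1 0))))))))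
      _ = p 0 3 * (p 1 3 * (p 0 2 * (p 3 1 * (p 0 1 * (p 3 0 * (p 2 0 * (p 1 0))))))) := mcr (p 0 3) (mcr (p 1 3) (mcr (p 0 2) (cn (hcan 1 2 (by decide)) (p 3 1 * (p 0 1 * (p 3 0 * (p 2 0 * (p 1 0))))))))
      _ = p 0 3 * (p 1 3 * (p 0 2 * (p 3 1 * (p 3 0 * (p 0 1 * (p 2 0 * (p 1 0))))))) := mcr (p 0 3) (mcr (p 1 3) (mcr (p 0 2) (mcr (p 3 1) (sw (hcomm 0 1 3 0 (by decide) (by decide) (by decide)) (p 2 0 * (p 1 0))))))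
      _ = p 0 3 * (p 1 3 * (p 0 2 * (p 3 0 * (p 3 1 * (p 0 1 * (p 2 0 * (p 1 0))))))) := mcr (p 0 3) (mcr (p 1 3) (mcr (p 0 2) (sw (hcomm 3 1 3 0 (by decide) (by decide) (by decide)) (p 0 1 * (p 2 0 * (p 1 0))))))
      _ = p 0 3 * (p 1 3 * (p 3 0 * (p 0 2 * (p 3 1 * (p 0 1 * (p 2 0 * (p 1 0))))))) := mcr (p 0 3) (mcr (p 1 3) (sw (hcomm 0 2 3 0 (by decide) (by decide) (by decide)) (p 3 1 * (p 0 1 * (p 2 0 * (p 1 0))))))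
      _ = p 0 3 * (p 3 0 * (p 1 3 * (p 0 2 * (p 3 1 * (p 0 1 * (p 2 0 * (p 1 0))))))) := mcr (p 0 3) (sw (hcomm 1 3 3 0 (by decide) (by decide) (by decide)) (p 0 2 * (p 3 1 * (p 0 1 * (p 2 0 * (p 1 0))))))
      _ = p 1 3 * (p 0 2 * (p 3 1 * (p 0 1 * (p 2 0 * (p 1 0))))) := cn (hcan 0 3 (by decide)) (p 1 3 * (p 0 2 * (p 3 1 * (p 0 1 * (p 2 0 * (p 1 0))))))
      _ = p 1 3 * (p 0 2 * (p 3 1 * (p 0 1 * (p 1 0 * (p 2 0))))) := mcr (p 1 3) (mcr (p 0 2) (mcr (p 3 1) (mcr (p 0 1) (sw2 (hcomm 2 0 1 0 (by decide) (by decide) (by decide))))))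
      _ = p 1 3 * (p 0 2 * (p 3 1 * (p 2 0))) := mcr (p 1 3) (mcr (p 0 2) (mcr (p 3 1) (cn (hcan 0 1 (by decide)) (p 2 0))))
  have Fchain : c 0 * (c 1 * (c 2 * (c 3 * (c 4 * (p 1 3 * (p 0 2 * (p 3 1 * (c 0 * (c 1 * (c 2 * (c 3 * (c 4 * (p 1 3 * (p 2 0 * (p 3 1))))))))))))))) = c 0 * (c 1 * (c 2 * (c 3 * (c 4 * (c 0 * (c 1 * (c 2 * (c 3 * (c 4))))))))) := by
    calc c 0 * (c 1 * (c 2 * (c 3 * (c 4 * (p 1 3 * (p 0 2 * (p 3 1 * (c 0 * (c 1 * (c 2 * (c 3 * (c 4 * (p 1 3 * (p 2 0 * (p 3 1)))))))))))))))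
      _ = c 0 * (c 1 * (c 2 * (c 3 * (c 4 * (p 1 3 * (p 0 2 * (p 3 1 * (c 0 * (c 1 * (c 2 * (c 3 * (p 1 3 * (c 4 * (p 2 0 * (p 3 1))))))))))))))) := mcr (c 0) (mcr (c 1) (mcr (c 2) (mcr (c 3) (mcr (c 4) (mcr (p 1 3) (mcr (p 0 2) (mcr (p 3 1) (mcr (c 0) (mcr (c 1) (mcr (c 2) (mcr (c 3) (sw (hc 4 (p 1 3)) (p 2 0 * (p 3 1))))))))))))))
      _ = c 0 * (c 1 * (c 2 * (c 3 * (c 4 * (p 1 3 * (p 0 2 * (p 3 1 * (c 0 * (c 1 * (c 2 * (p 1 3 * (c 3 * (c 4 * (p 2 0 * (p 3 1))))))))))))))) := mcr (c 0) (mcr (c 1) (mcr (c 2) (mcr (c 3) (mcr (c 4) (mcr (p 1 3) (mcr (p 0 2) (mcr (p 3 1) (mcr (c 0) (mcr (c 1) (mcr (c 2) (sw (hc 3 (p 1 3)) (c 4 * (p 2 0 * (p 3 1))))))))))))))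
      _ = c 0 * (c 1 * (c 2 * (c 3 * (c 4 * (p 1 3 * (p 0 2 * (p 3 1 * (c 0 * (c 1 * (p 1 3 * (c 2 * (c 3 * (c 4 * (p 2 0 * (p 3 1))))))))))))))) := mcr (c 0) (mcr (c 1) (mcr (c 2) (mcr (c 3) (mcr (c 4) (mcr (p 1 3) (mcr (p 0 2) (mcr (p 3 1) (mcr (c 0) (mcr (c 1) (sw (hc 2 (p 1 3)) (c 3 * (c 4 * (p 2 0 * (p 3 1))))))))))))))
      _ = c 0 * (c 1 * (c 2 * (c 3 * (c 4 * (p 1 3 * (p 0 2 * (p 3 1 * (c 0 * (p 1 3 * (c 1 * (c 2 * (c 3 * (c 4 * (p 2 0 * (p 3 1))))))))))))))) := mcr (c 0) (mcr (c 1) (mcr (c 2) (mcr (c 3) (mcr (c 4) (mcr (p 1 3) (mcr (p 0 2) (mcr (p 3 1) (mcr (c 0) (sw (hc 1 (p 1 3)) (c 2 * (c 3 * (c 4 * (p 2 0 * (p 3 1))))))))))))))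
      _ = c 0 * (c 1 * (c 2 * (c 3 * (c 4 * (p 1 3 * (p 0 2 * (p 3 1 * (p 1 3 * (c 0 * (c 1 * (c 2 * (c 3 * (c 4 * (p 2 0 * (p 3 1))))))))))))))) := mcr (c 0) (mcr (c 1) (mcr (c 2) (mcr (c 3) (mcr (c 4) (mcr (p 1 3) (mcr (p 0 2) (mcr (p 3 1) (sw (hc 0 (p 1 3)) (c 1 * (c 2 * (c 3 * (c 4 * (p 2 0 * (p 3 1))))))))))))))
      _ = c 0 * (c 1 * (c 2 * (c 3 * (c 4 * (p 1 3 * (p 0 2 * (c 0 * (c 1 * (c 2 * (c 3 * (c 4 * (p 2 0 * (p 3 1))))))))))))) := mcr (c 0) (mcr (c 1) (mcr (c 2) (mcr (c 3) (mcr (c 4) (mcr (p 1 3) (mcr (p 0 2) (cn (hcan 3 1 (by decide)) (c 0 * (c 1 * (c 2 * (c 3 * (c 4 * (p 2 0 * (p 3 1))))))))))))))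
      _ = c 0 * (c 1 * (c 2 * (c 3 * (c 4 * (p 1 3 * (p 0 2 * (c 0 * (c 1 * (c 2 * (c 3 * (p 2 0 * (c 4 * (p 3 1))))))))))))) := mcr (c 0) (mcr (c 1) (mcr (c 2) (mcr (c 3) (mcr (c 4) (mcr (p 1 3) (mcr (p 0 2) (mcr (c 0) (mcr (c 1) (mcr (c 2) (mcr (c 3) (sw (hc 4 (p 2 0)) (p 3 1))))))))))))
      _ = c 0 * (c 1 * (c 2 * (c 3 * (c 4 * (p 1 3 * (p 0 2 * (c 0 * (c 1 * (c 2 * (p 2 0 * (c 3 * (c 4 * (p 3 1))))))))))))) := mcr (c 0) (mcr (c 1) (mcr (c 2) (mcr (c 3) (mcr (c 4) (mcr (p 1 3) (mcr (p 0 2) (mcr (c 0) (mcr (c 1) (mcr (c 2) (sw (hc 3 (p 2 0)) (c 4 * (p 3 1))))))))))))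
      _ = c 0 * (c 1 * (c 2 * (c 3 * (c 4 * (p 1 3 * (p 0 2 * (c 0 * (c 1 * (p 2 0 * (c 2 * (c 3 * (c 4 * (p 3 1))))))))))))) := mcr (c 0) (mcr (c 1) (mcr (c 2) (mcr (c 3) (mcr (c 4) (mcr (p 1 3) (mcr (p 0 2) (mcr (c 0) (mcr (c 1) (sw (hc 2 (p 2 0)) (c 3 * (c 4 * (p 3 1))))))))))))
      _ = c 0 * (c 1 * (c 2 * (c 3 * (c 4 * (p 1 3 * (p 0 2 * (c 0 * (p 2 0 * (c 1 * (c 2 * (c 3 * (c 4 * (p 3 1))))))))))))) := mcr (c 0) (mcr (c 1) (mcr (c 2) (mcr (c 3) (mcr (c 4) (mcr (p 1 3) (mcr (p 0 2) (mcr (c 0) (sw (hc 1 (p 2 0)) (c 2 * (c 3 * (c 4 * (p 3 1))))))))))))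
      _ = c 0 * (c 1 * (c 2 * (c 3 * (c 4 * (p 1 3 * (p 0 2 * (p 2 0 * (c 0 * (c 1 * (c 2 * (c 3 * (c 4 * (p 3 1))))))))))))) := mcr (c 0) (mcr (c 1) (mcr (c 2) (mcr (c 3) (mcr (c 4) (mcr (p 1 3) (mcr (p 0 2) (sw (hc 0 (p 2 0)) (c 1 * (c 2 * (c 3 * (c 4 * (p 3 1))))))))))))
      _ = c 0 * (c 1 * (c 2 * (c 3 * (c 4 * (p 1 3 * (c 0 * (c 1 * (c 2 * (c 3 * (c 4 * (p 3 1))))))))))) := mcr (c 0) (mcr (c 1) (mcr (c 2) (mcr (c 3) (mcr (c 4) (mcr (p 1 3) (cn (hcan 0 2 (by decide)) (c 0 * (c 1 * (c 2 * (c 3 * (c 4 * (p 3 1))))))))))))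
      _ = c 0 * (c 1 * (c 2 * (c 3 * (c 4 * (p 1 3 * (c 0 * (c 1 * (c 2 * (c 3 * (p 3 1 * (c 4))))))))))) := mcr (c 0) (mcr (c 1) (mcr (c 2) (mcr (c 3) (mcr (c 4) (mcr (p 1 3) (mcr (c 0) (mcr (c 1) (mcr (c 2) (mcr (c 3) (sw2 (hc 4 (p 3 1))))))))))))
      _ = c 0 * (c 1 * (c 2 * (c 3 * (c 4 * (p 1 3 * (c 0 * (c 1 * (c 2 * (p 3 1 * (c 3 * (c 4))))))))))) := mcr (c 0) (mcr (c 1) (mcr (c 2) (mcr (c 3) (mcr (c 4) (mcr (p 1 3) (mcr (c 0) (mcr (c 1) (mcr (c 2) (sw (hc 3 (p 3 1)) (c 4))))))))))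
      _ = c 0 * (c 1 * (c 2 * (c 3 * (c 4 * (p 1 3 * (c 0 * (c 1 * (p 3 1 * (c 2 * (c 3 * (c 4))))))))))) := mcr (c 0) (mcr (c 1) (mcr (c 2) (mcr (c 3) (mcr (c 4) (mcr (p 1 3) (mcr (c 0) (mcr (c 1) (sw (hc 2 (p 3 1)) (c 3 * (c 4))))))))))
      _ = c 0 * (c 1 * (c 2 * (c 3 * (c 4 * (p 1 3 * (c 0 * (p 3 1 * (c 1 * (c 2 * (c 3 * (c 4))))))))))) := mcr (c 0) (mcr (c 1) (mcr (c 2) (mcr (c 3) (mcr (c 4) (mcr (p 1 3) (mcr (c 0) (sw (hc 1 (p 3 1)) (c 2 * (c 3 * (c 4))))))))))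
      _ = c 0 * (c 1 * (c 2 * (c 3 * (c 4 * (p 1 3 * (p 3 1 * (c 0 * (c 1 * (c 2 * (c 3 * (c 4))))))))))) := mcr (c 0) (mcr (c 1) (mcr (c 2) (mcr (c 3) (mcr (c 4) (mcr (p 1 3) (sw (hc 0 (p 3 1)) (c 1 * (c 2 * (c 3 * (c 4))))))))))
      _ = c 0 * (c 1 * (c 2 * (c 3 * (c 4 * (c 0 * (c 1 * (c 2 * (c 3 * (c 4))))))))) := mcr (c 0) (mcr (c 1) (mcr (c 2) (mcr (c 3) (mcr (c 4) (cn (hcan 1 3 (by decide)) (c 0 * (c 1 * (c 2 * (c 3 * (c 4))))))))))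
  have C1 : c 3 * (p 0 3 * (p 1 3 * (p 2 3 * (c 4 * (c 0 * (p 3 0 * (p 2 0 * (p 1 0 * (c 1 * (p 3 1 * (p 0 1 * (p 2 1 * (c 2 * (p 3 2 * (p 0 2 * (p 1 2)))))))))))))))) = c 0 * (c 1 * (c 2 * (c 3 * (c 4 * (p 1 3 * (p 2 0 * (p 3 1 * (p 0 2)))))))) := by
    calc c 3 * (p 0 3 * (p 1 3 * (p 2 3 * (c 4 * (c 0 * (p 3 0 * (p 2 0 * (p 1 0 * (c 1 * (p 3 1 * (p 0 1 * (p 2 1 * (c 2 * (p 3 2 * (p 0 2 * (p 1 2))))))))))))))))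
      _ = c 3 * (p 0 3 * (p 1 3 * (p 2 3 * (c 0 * (c 4 * (p 3 0 * (p 2 0 * (p 1 0 * (c 1 * (p 3 1 * (p 0 1 * (p 2 1 * (c 2 * (p 3 2 * (p 0 2 * (p 1 2)))))))))))))))) := mcr (c 3) (mcr (p 0 3) (mcr (p 1 3) (mcr (p 2 3) (sw (hc 4 (c 0)) (p 3 0 * (p 2 0 * (p 1 0 * (c 1 * (p 3 1 * (p 0 1 * (p 2 1 * (c 2 * (p 3 2 * (p 0 2 * (p 1 2)))))))))))))))
      _ = c 3 * (p 0 3 * (p 1 3 * (c 0 * (p 2 3 * (c 4 * (p 3 0 * (p 2 0 * (p 1 0 * (c 1 * (p 3 1 * (p 0 1 * (p 2 1 * (c 2 * (p 3 2 * (p 0 2 * (p 1 2)))))))))))))))) := mcr (c 3) (mcr (p 0 3) (mcr (p 1 3) (sw ((hc 0 (p 2 3)).symm) (c 4 * (p 3 0 * (p 2 0 * (p 1 0 * (c 1 * (p 3 1 * (p 0 1 * (p 2 1 * (c 2 * (p 3 2 * (p 0 2 * (p 1 2)))))))))))))))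
      _ = c 3 * (p 0 3 * (c 0 * (p 1 3 * (p 2 3 * (c 4 * (p 3 0 * (p 2 0 * (p 1 0 * (c 1 * (p 3 1 * (p 0 1 * (p 2 1 * (c 2 * (p 3 2 * (p 0 2 * (p 1 2)))))))))))))))) := mcr (c 3) (mcr (p 0 3) (sw ((hc 0 (p 1 3)).symm) (p 2 3 * (c 4 * (p 3 0 * (p 2 0 * (p 1 0 * (c 1 * (p 3 1 * (p 0 1 * (p 2 1 * (c 2 * (p 3 2 * (p 0 2 * (p 1 2)))))))))))))))
      _ = c 3 * (c 0 * (p 0 3 * (p 1 3 * (p 2 3 * (c 4 * (p 3 0 * (p 2 0 * (p 1 0 * (c 1 * (p 3 1 * (p 0 1 * (p 2 1 * (c 2 * (p 3 2 * (p 0 2 * (p 1 2)))))))))))))))) := mcr (c 3) (sw ((hc 0 (p 0 3)).symm) (p 1 3 * (p 2 3 * (c 4 * (p 3 0 * (p 2 0 * (p 1 0 * (c 1 * (p 3 1 * (p 0 1 * (p 2 1 * (c 2 * (p 3 2 * (p 0 2 * (p 1 2)))))))))))))))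
      _ = c 0 * (c 3 * (p 0 3 * (p 1 3 * (p 2 3 * (c 4 * (p 3 0 * (p 2 0 * (p 1 0 * (c 1 * (p 3 1 * (p 0 1 * (p 2 1 * (c 2 * (p 3 2 * (p 0 2 * (p 1 2)))))))))))))))) := sw (hc 3 (c 0)) (p 0 3 * (p 1 3 * (p 2 3 * (c 4 * (p 3 0 * (p 2 0 * (p 1 0 * (c 1 * (p 3 1 * (p 0 1 * (p 2 1 * (c 2 * (p 3 2 * (p 0 2 * (p 1 2)))))))))))))))
      _ = c 0 * (c 3 * (p 0 3 * (p 1 3 * (p 2 3 * (c 4 * (p 3 0 * (p 2 0 * (c 1 * (p 1 0 * (p 3 1 * (p 0 1 * (p 2 1 * (c 2 * (p 3 2 * (p 0 2 * (p 1 2)))))))))))))))) := mcr (c 0) (mcr (c 3) (mcr (p 0 3) (mcr (p 1 3) (mcr (p 2 3) (mcr (c 4) (mcr (p 3 0) (mcr (p 2 0) (sw ((hc 1 (p 1 0)).symm) (p 3 1 * (p 0 1 * (p 2 1 * (c 2 * (p 3 2 * (p 0 2 * (p 1 2)))))))))))))))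
      _ = c 0 * (c 3 * (p 0 3 * (p 1 3 * (p 2 3 * (c 4 * (p 3 0 * (c 1 * (p 2 0 * (p 1 0 * (p 3 1 * (p 0 1 * (p 2 1 * (c 2 * (p 3 2 * (p 0 2 * (p 1 2)))))))))))))))) := mcr (c 0) (mcr (c 3) (mcr (p 0 3) (mcr (p 1 3) (mcr (p 2 3) (mcr (c 4) (mcr (p 3 0) (sw ((hc 1 (p 2 0)).symm) (p 1 0 * (p 3 1 * (p 0 1 * (p 2 1 * (c 2 * (p 3 2 * (p 0 2 * (p 1 2)))))))))))))))
      _ = c 0 * (c 3 * (p 0 3 * (p 1 3 * (p 2 3 * (c 4 * (c 1 * (p 3 0 * (p 2 0 * (p 1 0 * (p 3 1 * (p 0 1 * (p 2 1 * (c 2 * (p 3 2 * (p 0 2 * (p 1 2)))))))))))))))) := mcr (c 0) (mcr (c 3) (mcr (p 0 3) (mcr (p 1 3) (mcr (p 2 3) (mcr (c 4) (sw ((hc 1 (p 3 0)).symm) (p 2 0 * (p 1 0 * (p 3 1 * (p 0 1 * (p 2 1 * (c 2 * (p 3 2 * (p 0 2 * (p 1 2)))))))))))))))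
      _ = c 0 * (c 3 * (p 0 3 * (p 1 3 * (p 2 3 * (c 1 * (c 4 * (p 3 0 * (p 2 0 * (p 1 0 * (p 3 1 * (p 0 1 * (p 2 1 * (c 2 * (p 3 2 * (p 0 2 * (p 1 2)))))))))))))))) := mcr (c 0) (mcr (c 3) (mcr (p 0 3) (mcr (p 1 3) (mcr (p 2 3) (sw (hc 4 (c 1)) (p 3 0 * (p 2 0 * (p 1 0 * (p 3 1 * (p 0 1 * (p 2 1 * (c 2 * (p 3 2 * (p 0 2 * (p 1 2)))))))))))))))
      _ = c 0 * (c 3 * (p 0 3 * (p 1 3 * (c 1 * (p 2 3 * (c 4 * (p 3 0 * (p 2 0 * (p 1 0 * (p 3 1 * (p 0 1 * (p 2 1 * (c 2 * (p 3 2 * (p 0 2 * (p 1 2)))))))))))))))) := mcr (c 0) (mcr (c 3) (mcr (p 0 3) (mcr (p 1 3) (sw ((hc 1 (p 2 3)).symm) (c 4 * (p 3 0 * (p 2 0 * (p 1 0 * (p 3 1 * (p 0 1 * (p 2 1 * (c 2 * (p 3 2 * (p 0 2 * (p 1 2)))))))))))))))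
      _ = c 0 * (c 3 * (p 0 3 * (c 1 * (p 1 3 * (p 2 3 * (c 4 * (p 3 0 * (p 2 0 * (p 1 0 * (p 3 1 * (p 0 1 * (p 2 1 * (c 2 * (p 3 2 * (p 0 2 * (p 1 2)))))))))))))))) := mcr (c 0) (mcr (c 3) (mcr (p 0 3) (sw ((hc 1 (p 1 3)).symm) (p 2 3 * (c 4 * (p 3 0 * (p 2 0 * (p 1 0 * (p 3 1 * (p 0 1 * (p 2 1 * (c 2 * (p 3 2 * (p 0 2 * (p 1 2)))))))))))))))
      _ = c 0 * (c 3 * (c 1 * (p 0 3 * (p 1 3 * (p 2 3 * (c 4 * (p 3 0 * (p 2 0 * (p 1 0 * (p 3 1 * (p 0 1 * (p 2 1 * (c 2 * (p 3 2 * (p 0 2 * (p 1 2)))))))))))))))) := mcr (c 0) (mcr (c 3) (sw ((hc 1 (p 0 3)).symm) (p 1 3 * (p 2 3 * (c 4 * (p 3 0 * (p 2 0 * (p 1 0 * (p 3 1 * (p 0 1 * (p 2 1 * (c 2 * (p 3 2 * (p 0 2 * (p 1 2)))))))))))))))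
      _ = c 0 * (c 1 * (c 3 * (p 0 3 * (p 1 3 * (p 2 3 * (c 4 * (p 3 0 * (p 2 0 * (p 1 0 * (p 3 1 * (p 0 1 * (p 2 1 * (c 2 * (p 3 2 * (p 0 2 * (p 1 2)))))))))))))))) := mcr (c 0) (sw (hc 3 (c 1)) (p 0 3 * (p 1 3 * (p 2 3 * (c 4 * (p 3 0 * (p 2 0 * (p 1 0 * (p 3 1 * (p 0 1 * (p 2 1 * (c 2 * (p 3 2 * (p 0 2 * (p 1 2)))))))))))))))
      _ = c 0 * (c 1 * (c 3 * (p 0 3 * (p 1 3 * (p 2 3 * (c 4 * (p 3 0 * (p 2 0 * (p 1 0 * (p 3 1 * (p 0 1 * (c 2 * (p 2 1 * (p 3 2 * (p 0 2 * (p 1 2)))))))))))))))) := mcr (c 0) (mcr (c 1) (mcr (c 3) (mcr (p 0 3) (mcr (p 1 3) (mcr (p 2 3) (mcr (c 4) (mcr (p 3 0) (mcr (p 2 0) (mcr (p 1 0) (mcr (p 3 1) (mcr (p 0 1) (sw ((hc 2 (p 2 1)).symm) (p 3 2 * (p 0 2 * (p 1 2)))))))))))))))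
      _ = c 0 * (c 1 * (c 3 * (p 0 3 * (p 1 3 * (p 2 3 * (c 4 * (p 3 0 * (p 2 0 * (p 1 0 * (p 3 1 * (c 2 * (p 0 1 * (p 2 1 * (p 3 2 * (p 0 2 * (p 1 2)))))))))))))))) := mcr (c 0) (mcr (c 1) (mcr (c 3) (mcr (p 0 3) (mcr (p 1 3) (mcr (p 2 3) (mcr (c 4) (mcr (p 3 0) (mcr (p 2 0) (mcr (p 1 0) (mcr (p 3 1) (sw ((hc 2 (p 0 1)).symm) (p 2 1 * (p 3 2 * (p 0 2 * (p 1 2)))))))))))))))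
      _ = c 0 * (c 1 * (c 3 * (p 0 3 * (p 1 3 * (p 2 3 * (c 4 * (p 3 0 * (p 2 0 * (p 1 0 * (c 2 * (p 3 1 * (p 0 1 * (p 2 1 * (p 3 2 * (p 0 2 * (p 1 2)))))))))))))))) := mcr (c 0) (mcr (c 1) (mcr (c 3) (mcr (p 0 3) (mcr (p 1 3) (mcr (p 2 3) (mcr (c 4) (mcr (p 3 0) (mcr (p 2 0) (mcr (p 1 0) (sw ((hc 2 (p 3 1)).symm) (p 0 1 * (p 2 1 * (p 3 2 * (p 0 2 * (p 1 2)))))))))))))))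
      _ = c 0 * (c 1 * (c 3 * (p 0 3 * (p 1 3 * (p 2 3 * (c 4 * (p 3 0 * (p 2 0 * (c 2 * (p 1 0 * (p 3 1 * (p 0 1 * (p 2 1 * (p 3 2 * (p 0 2 * (p 1 2)))))))))))))))) := mcr (c 0) (mcr (c 1) (mcr (c 3) (mcr (p 0 3) (mcr (p 1 3) (mcr (p 2 3) (mcr (c 4) (mcr (p 3 0) (mcr (p 2 0) (sw ((hc 2 (p 1 0)).symm) (p 3 1 * (p 0 1 * (p 2 1 * (p 3 2 * (p 0 2 * (p 1 2)))))))))))))))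
      _ = c 0 * (c 1 * (c 3 * (p 0 3 * (p 1 3 * (p 2 3 * (c 4 * (p 3 0 * (c 2 * (p 2 0 * (p 1 0 * (p 3 1 * (p 0 1 * (p 2 1 * (p 3 2 * (p 0 2 * (p 1 2)))))))))))))))) := mcr (c 0) (mcr (c 1) (mcr (c 3) (mcr (p 0 3) (mcr (p 1 3) (mcr (p 2 3) (mcr (c 4) (mcr (p 3 0) (sw ((hc 2 (p 2 0)).symm) (p 1 0 * (p 3 1 * (p 0 1 * (p 2 1 * (p 3 2 * (p 0 2 * (p 1 2)))))))))))))))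
      _ = c 0 * (c 1 * (c 3 * (p 0 3 * (p 1 3 * (p 2 3 * (c 4 * (c 2 * (p 3 0 * (p 2 0 * (p 1 0 * (p 3 1 * (p 0 1 * (p 2 1 * (p 3 2 * (p 0 2 * (p 1 2)))))))))))))))) := mcr (c 0) (mcr (c 1) (mcr (c 3) (mcr (p 0 3) (mcr (p 1 3) (mcr (p 2 3) (mcr (c 4) (sw ((hc 2 (p 3 0)).symm) (p 2 0 * (p 1 0 * (p 3 1 * (p 0 1 * (p 2 1 * (p 3 2 * (p 0 2 * (p 1 2)))))))))))))))
      _ = c 0 * (c 1 * (c 3 * (p 0 3 * (p 1 3 * (p 2 3 * (c 2 * (c 4 * (p 3 0 * (p 2 0 * (p 1 0 * (p 3 1 * (p 0 1 * (p 2 1 * (p 3 2 * (p 0 2 * (p 1 2)))))))))))))))) := mcr (c 0) (mcr (c 1) (mcr (c 3) (mcr (p 0 3) (mcr (p 1 3) (mcr (p 2 3) (sw (hc 4 (c 2)) (p 3 0 * (p 2 0 * (p 1 0 * (p 3 1 * (p 0 1 * (p 2 1 * (p 3 2 * (p 0 2 * (p 1 2)))))))))))))))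
      _ = c 0 * (c 1 * (c 3 * (p 0 3 * (p 1 3 * (c 2 * (p 2 3 * (c 4 * (p 3 0 * (p 2 0 * (p 1 0 * (p 3 1 * (p 0 1 * (p 2 1 * (p 3 2 * (p 0 2 * (p 1 2)))))))))))))))) := mcr (c 0) (mcr (c 1) (mcr (c 3) (mcr (p 0 3) (mcr (p 1 3) (sw ((hc 2 (p 2 3)).symm) (c 4 * (p 3 0 * (p 2 0 * (p 1 0 * (p 3 1 * (p 0 1 * (p 2 1 * (p 3 2 * (p 0 2 * (p 1 2)))))))))))))))
      _ = c 0 * (c 1 * (c 3 * (p 0 3 * (c 2 * (p 1 3 * (p 2 3 * (c 4 * (p 3 0 * (p 2 0 * (p 1 0 * (p 3 1 * (p 0 1 * (p 2 1 * (p 3 2 * (p 0 2 * (p 1 2)))))))))))))))) := mcr (c 0) (mcr (c 1) (mcr (c 3) (mcr (p 0 3) (sw ((hc 2 (p 1 3)).symm) (p 2 3 * (c 4 * (p 3 0 * (p 2 0 * (p 1 0 * (p 3 1 * (p 0 1 * (p 2 1 * (p 3 2 * (p 0 2 * (p 1 2)))))))))))))))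
      _ = c 0 * (c 1 * (c 3 * (c 2 * (p 0 3 * (p 1 3 * (p 2 3 * (c 4 * (p 3 0 * (p 2 0 * (p 1 0 * (p 3 1 * (p 0 1 * (p 2 1 * (p 3 2 * (p 0 2 * (p 1 2)))))))))))))))) := mcr (c 0) (mcr (c 1) (mcr (c 3) (sw ((hc 2 (p 0 3)).symm) (p 1 3 * (p 2 3 * (c 4 * (p 3 0 * (p 2 0 * (p 1 0 * (p 3 1 * (p 0 1 * (p 2 1 * (p 3 2 * (p 0 2 * (p 1 2)))))))))))))))
      _ = c 0 * (c 1 * (c 2 * (c 3 * (p 0 3 * (p 1 3 * (p 2 3 * (c 4 * (p 3 0 * (p 2 0 * (p 1 0 * (p 3 1 * (p 0 1 * (p 2 1 * (p 3 2 * (p 0 2 * (p 1 2)))))))))))))))) := mcr (c 0) (mcr (c 1) (sw (hc 3 (c 2)) (p 0 3 * (p 1 3 * (p 2 3 * (c 4 * (p 3 0 * (p 2 0 * (p 1 0 * (p 3 1 * (p 0 1 * (p 2 1 * (p 3 2 * (p 0 2 * (p 1 2)))))))))))))))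
      _ = c 0 * (c 1 * (c 2 * (c 3 * (p 0 3 * (p 1 3 * (c 4 * (p 2 3 * (p 3 0 * (p 2 0 * (p 1 0 * (p 3 1 * (p 0 1 * (p 2 1 * (p 3 2 * (p 0 2 * (p 1 2)))))))))))))))) := mcr (c 0) (mcr (c 1) (mcr (c 2) (mcr (c 3) (mcr (p 0 3) (mcr (p 1 3) (sw ((hc 4 (p 2 3)).symm) (p 3 0 * (p 2 0 * (p 1 0 * (p 3 1 * (p 0 1 * (p 2 1 * (p 3 2 * (p 0 2 * (p 1 2)))))))))))))))
      _ = c 0 * (c 1 * (c 2 * (c 3 * (p 0 3 * (c 4 * (p 1 3 * (p 2 3 * (p 3 0 * (p 2 0 * (p 1 0 * (p 3 1 * (p 0 1 * (p 2 1 * (p 3 2 * (p 0 2 * (p 1 2)))))))))))))))) := mcr (c 0) (mcr (c 1) (mcr (c 2) (mcr (c 3) (mcr (p 0 3) (sw ((hc 4 (p 1 3)).symm) (p 2 3 * (p 3 0 * (p 2 0 * (p 1 0 * (p 3 1 * (p 0 1 * (p 2 1 * (p 3 2 * (p 0 2 * (p 1 2)))))))))))))))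
      _ = c 0 * (c 1 * (c 2 * (c 3 * (c 4 * (p 0 3 * (p 1 3 * (p 2 3 * (p 3 0 * (p 2 0 * (p 1 0 * (p 3 1 * (p 0 1 * (p 2 1 * (p 3 2 * (p 0 2 * (p 1 2)))))))))))))))) := mcr (c 0) (mcr (c 1) (mcr (c 2) (mcr (c 3) (sw ((hc 4 (p 0 3)).symm) (p 1 3 * (p 2 3 * (p 3 0 * (p 2 0 * (p 1 0 * (p 3 1 * (p 0 1 * (p 2 1 * (p 3 2 * (p 0 2 * (p 1 2)))))))))))))))
      _ = c 0 * (c 1 * (c 2 * (c 3 * (c 4 * (p 1 3 * (p 2 0 * (p 3 1 * (p 0 2)))))))) := mcr (c 0) (mcr (c 1) (mcr (c 2) (mcr (c 3) (mcr (c 4) (I7)))))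
  have C2 : c 3 * (p 0 3 * (p 1 3 * (p 2 3 * (c 4 * (c 2 * (p 3 2 * (p 0 2 * (p 1 2 * (c 1 * (p 3 1 * (p 2 1 * (p 0 1 * (c 0 * (p 3 0 * (p 2 0 * (p 1 0)))))))))))))))) = c 0 * (c 1 * (c 2 * (c 3 * (c 4 * (p 1 3 * (p 0 2 * (p 3 1 * (p 2 0)))))))) := by
    calc c 3 * (p 0 3 * (p 1 3 * (p 2 3 * (c 4 * (c 2 * (p 3 2 * (p 0 2 * (p 1 2 * (c 1 * (p 3 1 * (p 2 1 * (p 0 1 * (c 0 * (p 3 0 * (p 2 0 * (p 1 0))))))))))))))))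
      _ = c 3 * (p 0 3 * (p 1 3 * (p 2 3 * (c 4 * (c 2 * (p 3 2 * (p 0 2 * (p 1 2 * (c 1 * (p 3 1 * (p 2 1 * (c 0 * (p 0 1 * (p 3 0 * (p 2 0 * (p 1 0)))))))))))))))) := mcr (c 3) (mcr (p 0 3) (mcr (p 1 3) (mcr (p 2 3) (mcr (c 4) (mcr (c 2) (mcr (p 3 2) (mcr (p 0 2) (mcr (p 1 2) (mcr (c 1) (mcr (p 3 1) (mcr (p 2 1) (sw ((hc 0 (p 0 1)).symm) (p 3 0 * (p 2 0 * (p 1 0)))))))))))))))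
      _ = c 3 * (p 0 3 * (p 1 3 * (p 2 3 * (c 4 * (c 2 * (p 3 2 * (p 0 2 * (p 1 2 * (c 1 * (p 3 1 * (c 0 * (p 2 1 * (p 0 1 * (p 3 0 * (p 2 0 * (p 1 0)))))))))))))))) := mcr (c 3) (mcr (p 0 3) (mcr (p 1 3) (mcr (p 2 3) (mcr (c 4) (mcr (c 2) (mcr (p 3 2) (mcr (p 0 2) (mcr (p 1 2) (mcr (c 1) (mcr (p 3 1) (sw ((hc 0 (p 2 1)).symm) (p 0 1 * (p 3 0 * (p 2 0 * (p 1 0)))))))))))))))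
      _ = c 3 * (p 0 3 * (p 1 3 * (p 2 3 * (c 4 * (c 2 * (p 3 2 * (p 0 2 * (p 1 2 * (c 1 * (c 0 * (p 3 1 * (p 2 1 * (p 0 1 * (p 3 0 * (p 2 0 * (p 1 0)))))))))))))))) := mcr (c 3) (mcr (p 0 3) (mcr (p 1 3) (mcr (p 2 3) (mcr (c 4) (mcr (c 2) (mcr (p 3 2) (mcr (p 0 2) (mcr (p 1 2) (mcr (c 1) (sw ((hc 0 (p 3 1)).symm) (p 2 1 * (p 0 1 * (p 3 0 * (p 2 0 * (p 1 0)))))))))))))))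
      _ = c 3 * (p 0 3 * (p 1 3 * (p 2 3 * (c 4 * (c 2 * (p 3 2 * (p 0 2 * (p 1 2 * (c 0 * (c 1 * (p 3 1 * (p 2 1 * (p 0 1 * (p 3 0 * (p 2 0 * (p 1 0)))))))))))))))) := mcr (c 3) (mcr (p 0 3) (mcr (p 1 3) (mcr (p 2 3) (mcr (c 4) (mcr (c 2) (mcr (p 3 2) (mcr (p 0 2) (mcr (p 1 2) (sw (hc 1 (c 0)) (p 3 1 * (p 2 1 * (p 0 1 * (p 3 0 * (p 2 0 * (p 1 0)))))))))))))))
      _ = c 3 * (p 0 3 * (p 1 3 * (p 2 3 * (c 4 * (c 2 * (p 3 2 * (p 0 2 * (c 0 * (p 1 2 * (c 1 * (p 3 1 * (p 2 1 * (p 0 1 * (p 3 0 * (p 2 0 * (p 1 0)))))))))))))))) := mcr (c 3) (mcr (p 0 3) (mcr (p 1 3) (mcr (p 2 3) (mcr (c 4) (mcr (c 2) (mcr (p 3 2) (mcr (p 0 2) (sw ((hc 0 (p 1 2)).symm) (c 1 * (p 3 1 * (p 2 1 * (p 0 1 * (p 3 0 * (p 2 0 * (p 1 0)))))))))))))))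
      _ = c 3 * (p 0 3 * (p 1 3 * (p 2 3 * (c 4 * (c 2 * (p 3 2 * (c 0 * (p 0 2 * (p 1 2 * (c 1 * (p 3 1 * (p 2 1 * (p 0 1 * (p 3 0 * (p 2 0 * (p 1 0)))))))))))))))) := mcr (c 3) (mcr (p 0 3) (mcr (p 1 3) (mcr (p 2 3) (mcr (c 4) (mcr (c 2) (mcr (p 3 2) (sw ((hc 0 (p 0 2)).symm) (p 1 2 * (c 1 * (p 3 1 * (p 2 1 * (p 0 1 * (p 3 0 * (p 2 0 * (p 1 0)))))))))))))))
      _ = c 3 * (p 0 3 * (p 1 3 * (p 2 3 * (c 4 * (c 2 * (c 0 * (p 3 2 * (p 0 2 * (p 1 2 * (c 1 * (p 3 1 * (p 2 1 * (p 0 1 * (p 3 0 * (p 2 0 * (p 1 0)))))))))))))))) := mcr (c 3) (mcr (p 0 3) (mcr (p 1 3) (mcr (p 2 3) (mcr (c 4) (mcr (c 2) (sw ((hc 0 (p 3 2)).symm) (p 0 2 * (p 1 2 * (c 1 * (p 3 1 * (p 2 1 * (p 0 1 * (p 3 0 * (p 2 0 * (p 1 0)))))))))))))))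
      _ = c 3 * (p 0 3 * (p 1 3 * (p 2 3 * (c 4 * (c 0 * (c 2 * (p 3 2 * (p 0 2 * (p 1 2 * (c 1 * (p 3 1 * (p 2 1 * (p 0 1 * (p 3 0 * (p 2 0 * (p 1 0)))))))))))))))) := mcr (c 3) (mcr (p 0 3) (mcr (p 1 3) (mcr (p 2 3) (mcr (c 4) (sw (hc 2 (c 0)) (p 3 2 * (p 0 2 * (p 1 2 * (c 1 * (p 3 1 * (p 2 1 * (p 0 1 * (p 3 0 * (p 2 0 * (p 1 0)))))))))))))))
      _ = c 3 * (p 0 3 * (p 1 3 * (p 2 3 * (c 0 * (c 4 * (c 2 * (p 3 2 * (p 0 2 * (p 1 2 * (c 1 * (p 3 1 * (p 2 1 * (p 0 1 * (p 3 0 * (p 2 0 * (p 1 0)))))))))))))))) := mcr (c 3) (mcr (p 0 3) (mcr (p 1 3) (mcr (p 2 3) (sw (hc 4 (c 0)) (c 2 * (p 3 2 * (p 0 2 * (p 1 2 * (c 1 * (p 3 1 * (p 2 1 * (p 0 1 * (p 3 0 * (p 2 0 * (p 1 0)))))))))))))))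
      _ = c 3 * (p 0 3 * (p 1 3 * (c 0 * (p 2 3 * (c 4 * (c 2 * (p 3 2 * (p 0 2 * (p 1 2 * (c 1 * (p 3 1 * (p 2 1 * (p 0 1 * (p 3 0 * (p 2 0 * (p 1 0)))))))))))))))) := mcr (c 3) (mcr (p 0 3) (mcr (p 1 3) (sw ((hc 0 (p 2 3)).symm) (c 4 * (c 2 * (p 3 2 * (p 0 2 * (p 1 2 * (c 1 * (p 3 1 * (p 2 1 * (p 0 1 * (p 3 0 * (p 2 0 * (p 1 0)))))))))))))))
      _ = c 3 * (p 0 3 * (c 0 * (p 1 3 * (p 2 3 * (c 4 * (c 2 * (p 3 2 * (p 0 2 * (p 1 2 * (c 1 * (p 3 1 * (p 2 1 * (p 0 1 * (p 3 0 * (p 2 0 * (p 1 0)))))))))))))))) := mcr (c 3) (mcr (p 0 3) (sw ((hc 0 (p 1 3)).symm) (p 2 3 * (c 4 * (c 2 * (p 3 2 * (p 0 2 * (p 1 2 * (c 1 * (p 3 1 * (p 2 1 * (p 0 1 * (p 3 0 * (p 2 0 * (p 1 0)))))))))))))))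
      _ = c 3 * (c 0 * (p 0 3 * (p 1 3 * (p 2 3 * (c 4 * (c 2 * (p 3 2 * (p 0 2 * (p 1 2 * (c 1 * (p 3 1 * (p 2 1 * (p 0 1 * (p 3 0 * (p 2 0 * (p 1 0)))))))))))))))) := mcr (c 3) (sw ((hc 0 (p 0 3)).symm) (p 1 3 * (p 2 3 * (c 4 * (c 2 * (p 3 2 * (p 0 2 * (p 1 2 * (c 1 * (p 3 1 * (p 2 1 * (p 0 1 * (p 3 0 * (p 2 0 * (p 1 0)))))))))))))))
      _ = c 0 * (c 3 * (p 0 3 * (p 1 3 * (p 2 3 * (c 4 * (c 2 * (p 3 2 * (p 0 2 * (p 1 2 * (c 1 * (p 3 1 * (p 2 1 * (p 0 1 * (p 3 0 * (p 2 0 * (p 1 0)))))))))))))))) := sw (hc 3 (c 0)) (p 0 3 * (p 1 3 * (p 2 3 * (c 4 * (c 2 * (p 3 2 * (p 0 2 * (p 1 2 * (c 1 * (p 3 1 * (p 2 1 * (p 0 1 * (p 3 0 * (p 2 0 * (p 1 0)))))))))))))))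
      _ = c 0 * (c 3 * (p 0 3 * (p 1 3 * (p 2 3 * (c 4 * (c 2 * (p 3 2 * (p 0 2 * (c 1 * (p 1 2 * (p 3 1 * (p 2 1 * (p 0 1 * (p 3 0 * (p 2 0 * (p 1 0)))))))))))))))) := mcr (c 0) (mcr (c 3) (mcr (p 0 3) (mcr (p 1 3) (mcr (p 2 3) (mcr (c 4) (mcr (c 2) (mcr (p 3 2) (mcr (p 0 2) (sw ((hc 1 (p 1 2)).symm) (p 3 1 * (p 2 1 * (p 0 1 * (p 3 0 * (p 2 0 * (p 1 0)))))))))))))))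
      _ = c 0 * (c 3 * (p 0 3 * (p 1 3 * (p 2 3 * (c 4 * (c 2 * (p 3 2 * (c 1 * (p 0 2 * (p 1 2 * (p 3 1 * (p 2 1 * (p 0 1 * (p 3 0 * (p 2 0 * (p 1 0)))))))))))))))) := mcr (c 0) (mcr (c 3) (mcr (p 0 3) (mcr (p 1 3) (mcr (p 2 3) (mcr (c 4) (mcr (c 2) (mcr (p 3 2) (sw ((hc 1 (p 0 2)).symm) (p 1 2 * (p 3 1 * (p 2 1 * (p 0 1 * (p 3 0 * (p 2 0 * (p 1 0)))))))))))))))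
      _ = c 0 * (c 3 * (p 0 3 * (p 1 3 * (p 2 3 * (c 4 * (c 2 * (c 1 * (p 3 2 * (p 0 2 * (p 1 2 * (p 3 1 * (p 2 1 * (p 0 1 * (p 3 0 * (p 2 0 * (p 1 0)))))))))))))))) := mcr (c 0) (mcr (c 3) (mcr (p 0 3) (mcr (p 1 3) (mcr (p 2 3) (mcr (c 4) (mcr (c 2) (sw ((hc 1 (p 3 2)).symm) (p 0 2 * (p 1 2 * (p 3 1 * (p 2 1 * (p 0 1 * (p 3 0 * (p 2 0 * (p 1 0)))))))))))))))
      _ = c 0 * (c 3 * (p 0 3 * (p 1 3 * (p 2 3 * (c 4 * (c 1 * (c 2 * (p 3 2 * (p 0 2 * (p 1 2 * (p 3 1 * (p 2 1 * (p 0 1 * (p 3 0 * (p 2 0 * (p 1 0)))))))))))))))) := mcr (c 0) (mcr (c 3) (mcr (p 0 3) (mcr (p 1 3) (mcr (p 2 3) (mcr (c 4) (sw (hc 2 (c 1)) (p 3 2 * (p 0 2 * (p 1 2 * (p 3 1 * (p 2 1 * (p 0 1 * (p 3 0 * (p 2 0 * (p 1 0)))))))))))))))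
      _ = c 0 * (c 3 * (p 0 3 * (p 1 3 * (p 2 3 * (c 1 * (c 4 * (c 2 * (p 3 2 * (p 0 2 * (p 1 2 * (p 3 1 * (p 2 1 * (p 0 1 * (p 3 0 * (p 2 0 * (p 1 0)))))))))))))))) := mcr (c 0) (mcr (c 3) (mcr (p 0 3) (mcr (p 1 3) (mcr (p 2 3) (sw (hc 4 (c 1)) (c 2 * (p 3 2 * (p 0 2 * (p 1 2 * (p 3 1 * (p 2 1 * (p 0 1 * (p 3 0 * (p 2 0 * (p 1 0)))))))))))))))
      _ = c 0 * (c 3 * (p 0 3 * (p 1 3 * (c 1 * (p 2 3 * (c 4 * (c 2 * (p 3 2 * (p 0 2 * (p 1 2 * (p 3 1 * (p 2 1 * (p 0 1 * (p 3 0 * (p 2 0 * (p 1 0)))))))))))))))) := mcr (c 0) (mcr (c 3) (mcr (p 0 3) (mcr (p 1 3) (sw ((hc 1 (p 2 3)).symm) (c 4 * (c 2 * (p 3 2 * (p 0 2 * (p 1 2 * (p 3 1 * (p 2 1 * (p 0 1 * (p 3 0 * (p 2 0 * (p 1 0)))))))))))))))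
      _ = c 0 * (c 3 * (p 0 3 * (c 1 * (p 1 3 * (p 2 3 * (c 4 * (c 2 * (p 3 2 * (p 0 2 * (p 1 2 * (p 3 1 * (p 2 1 * (p 0 1 * (p 3 0 * (p 2 0 * (p 1 0)))))))))))))))) := mcr (c 0) (mcr (c 3) (mcr (p 0 3) (sw ((hc 1 (p 1 3)).symm) (p 2 3 * (c 4 * (c 2 * (p 3 2 * (p 0 2 * (p 1 2 * (p 3 1 * (p 2 1 * (p 0 1 * (p 3 0 * (p 2 0 * (p 1 0)))))))))))))))
      _ = c 0 * (c 3 * (c 1 * (p 0 3 * (p 1 3 * (p 2 3 * (c 4 * (c 2 * (p 3 2 * (p 0 2 * (p 1 2 * (p 3 1 * (p 2 1 * (p 0 1 * (p 3 0 * (p 2 0 * (p 1 0)))))))))))))))) := mcr (c 0) (mcr (c 3) (sw ((hc 1 (p 0 3)).symm) (p 1 3 * (p 2 3 * (c 4 * (c 2 * (p 3 2 * (p 0 2 * (p 1 2 * (p 3 1 * (p 2 1 * (p 0 1 * (p 3 0 * (p 2 0 * (p 1 0)))))))))))))))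
      _ = c 0 * (c 1 * (c 3 * (p 0 3 * (p 1 3 * (p 2 3 * (c 4 * (c 2 * (p 3 2 * (p 0 2 * (p 1 2 * (p 3 1 * (p 2 1 * (p 0 1 * (p 3 0 * (p 2 0 * (p 1 0)))))))))))))))) := mcr (c 0) (sw (hc 3 (c 1)) (p 0 3 * (p 1 3 * (p 2 3 * (c 4 * (c 2 * (p 3 2 * (p 0 2 * (p 1 2 * (p 3 1 * (p 2 1 * (p 0 1 * (p 3 0 * (p 2 0 * (p 1 0)))))))))))))))
      _ = c 0 * (c 1 * (c 3 * (p 0 3 * (p 1 3 * (p 2 3 * (c 2 * (c 4 * (p 3 2 * (p 0 2 * (p 1 2 * (p 3 1 * (p 2 1 * (p 0 1 * (p 3 0 * (p 2 0 * (p 1 0)))))))))))))))) := mcr (c 0) (mcr (c 1) (mcr (c 3) (mcr (p 0 3) (mcr (p 1 3) (mcr (p 2 3) (sw (hc 4 (c 2)) (p 3 2 * (p 0 2 * (p 1 2 * (p 3 1 * (p 2 1 * (p 0 1 * (p 3 0 * (p 2 0 * (p 1 0)))))))))))))))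
      _ = c 0 * (c 1 * (c 3 * (p 0 3 * (p 1 3 * (c 2 * (p 2 3 * (c 4 * (p 3 2 * (p 0 2 * (p 1 2 * (p 3 1 * (p 2 1 * (p 0 1 * (p 3 0 * (p 2 0 * (p 1 0)))))))))))))))) := mcr (c 0) (mcr (c 1) (mcr (c 3) (mcr (p 0 3) (mcr (p 1 3) (sw ((hc 2 (p 2 3)).symm) (c 4 * (p 3 2 * (p 0 2 * (p 1 2 * (p 3 1 * (p 2 1 * (p 0 1 * (p 3 0 * (p 2 0 * (p 1 0)))))))))))))))
      _ = c 0 * (c 1 * (c 3 * (p 0 3 * (c 2 * (p 1 3 * (p 2 3 * (c 4 * (p 3 2 * (p 0 2 * (p 1 2 * (p 3 1 * (p 2 1 * (p 0 1 * (p 3 0 * (p 2 0 * (p 1 0)))))))))))))))) := mcr (c 0) (mcr (c 1) (mcr (c 3) (mcr (p 0 3) (sw ((hc 2 (p 1 3)).symm) (p 2 3 * (c 4 * (p 3 2 * (p 0 2 * (p 1 2 * (p 3 1 * (p 2 1 * (p 0 1 * (p 3 0 * (p 2 0 * (p 1 0)))))))))))))))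
      _ = c 0 * (c 1 * (c 3 * (c 2 * (p 0 3 * (p 1 3 * (p 2 3 * (c 4 * (p 3 2 * (p 0 2 * (p 1 2 * (p 3 1 * (p 2 1 * (p 0 1 * (p 3 0 * (p 2 0 * (p 1 0)))))))))))))))) := mcr (c 0) (mcr (c 1) (mcr (c 3) (sw ((hc 2 (p 0 3)).symm) (p 1 3 * (p 2 3 * (c 4 * (p 3 2 * (p 0 2 * (p 1 2 * (p 3 1 * (p 2 1 * (p 0 1 * (p 3 0 * (p 2 0 * (p 1 0)))))))))))))))
      _ = c 0 * (c 1 * (c 2 * (c 3 * (p 0 3 * (p 1 3 * (p 2 3 * (c 4 * (p 3 2 * (p 0 2 * (p 1 2 * (p 3 1 * (p 2 1 * (p 0 1 * (p 3 0 * (p 2 0 * (p 1 0)))))))))))))))) := mcr (c 0) (mcr (c 1) (sw (hc 3 (c 2)) (p 0 3 * (p 1 3 * (p 2 3 * (c 4 * (p 3 2 * (p 0 2 * (p 1 2 * (p 3 1 * (p 2 1 * (p 0 1 * (p 3 0 * (p 2 0 * (p 1 0)))))))))))))))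
      _ = c 0 * (c 1 * (c 2 * (c 3 * (p 0 3 * (p 1 3 * (c 4 * (p 2 3 * (p 3 2 * (p 0 2 * (p 1 2 * (p 3 1 * (p 2 1 * (p 0 1 * (p 3 0 * (p 2 0 * (p 1 0)))))))))))))))) := mcr (c 0) (mcr (c 1) (mcr (c 2) (mcr (c 3) (mcr (p 0 3) (mcr (p 1 3) (sw ((hc 4 (p 2 3)).symm) (p 3 2 * (p 0 2 * (p 1 2 * (p 3 1 * (p 2 1 * (p 0 1 * (p 3 0 * (p 2 0 * (p 1 0)))))))))))))))
      _ = c 0 * (c 1 * (c 2 * (c 3 * (p 0 3 * (c 4 * (p 1 3 * (p 2 3 * (p 3 2 * (p 0 2 * (p 1 2 * (p 3 1 * (p 2 1 * (p 0 1 * (p 3 0 * (p 2 0 * (p 1 0)))))))))))))))) := mcr (c 0) (mcr (c 1) (mcr (c 2) (mcr (c 3) (mcr (p 0 3) (sw ((hc 4 (p 1 3)).symm) (p 2 3 * (p 3 2 * (p 0 2 * (p 1 2 * (p 3 1 * (p 2 1 * (p 0 1 * (p 3 0 * (p 2 0 * (p 1 0)))))))))))))))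
      _ = c 0 * (c 1 * (c 2 * (c 3 * (c 4 * (p 0 3 * (p 1 3 * (p 2 3 * (p 3 2 * (p 0 2 * (p 1 2 * (p 3 1 * (p 2 1 * (p 0 1 * (p 3 0 * (p 2 0 * (p 1 0)))))))))))))))) := mcr (c 0) (mcr (c 1) (mcr (c 2) (mcr (c 3) (sw ((hc 4 (p 0 3)).symm) (p 1 3 * (p 2 3 * (p 3 2 * (p 0 2 * (p 1 2 * (p 3 1 * (p 2 1 * (p 0 1 * (p 3 0 * (p 2 0 * (p 1 0)))))))))))))))
      _ = c 0 * (c 1 * (c 2 * (c 3 * (c 4 * (p 1 3 * (p 0 2 * (p 3 1 * (p 2 0)))))))) := mcr (c 0) (mcr (c 1) (mcr (c 2) (mcr (c 3) (mcr (c 4) (I8)))))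
  have E1 : c 3 * (p 0 3 * (p 1 3 * (p 2 3))) = p 3 4 := by
    rw [← h3]; simp only [mul_assoc]; exact I1
  have E2 : c 4 * (p 0 4 * (p 1 4 * (p 2 4))) = p 4 3 := by
    rw [← h4]; simp only [mul_assoc]; exact I2
  have E4c : c 0 * (p 3 0 * (p 2 0 * (p 1 0))) = p 0 4 := by
    rw [(hc 0 _).eq, ← h0]; simp only [mul_assoc]; exact I4
  have E5c : c 1 * (p 3 1 * (p 0 1 * (p 2 1))) = p 1 4 := by
    rw [(hc 1 _).eq, ← h1]; simp only [mul_assoc]; exact I5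
  have E5c' : c 1 * (p 3 1 * (p 2 1 * (p 0 1))) = p 1 4 := by
    rw [(hc 1 _).eq, ← h1]; simp only [mul_assoc]; exact I5'
  have E6c : c 2 * (p 3 2 * (p 0 2 * (p 1 2))) = p 2 4 := by
    rw [(hc 2 _).eq, ← h2]; simp only [mul_assoc]; exact I6
  have G : (c 3 * (p 0 3 * (p 1 3 * (p 2 3)))) * (c 4 * (p 0 4 * (p 1 4 * (p 2 4)))) = 1 := by
    rw [E1, E2]; exact hcan 3 4 (by decide)
  have G1 := G
  rw [← E4c, ← E5c, ← E6c] at G1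
  simp only [mul_assoc] at G1
  have Main1 : c 0 * (c 1 * (c 2 * (c 3 * (c 4 * (p 1 3 * (p 2 0 * (p 3 1 * (p 0 2)))))))) = 1 :=
    C1.symm.trans G1
  have G' : (c 3 * (p 0 3 * (p 1 3 * (p 2 3)))) * (c 4 * (p 2 4 * (p 1 4 * (p 0 4)))) = 1 := by
    have hyy : p 2 4 * (p 1 4 * (p 0 4)) = p 0 4 * (p 1 4 * (p 2 4)) := by
      calc p 2 4 * (p 1 4 * (p 0 4))
        _ = p 2 4 * (p 0 4 * (p 1 4)) := mcr (p 2 4) (sw2 (hcomm 1 4 0 4 (by decide) (by decide) (by decide)))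
        _ = p 0 4 * (p 2 4 * (p 1 4)) := sw (hcomm 2 4 0 4 (by decide) (by decide) (by decide)) (p 1 4)
        _ = p 0 4 * (p 1 4 * (p 2 4)) := mcr (p 0 4) (sw2 (hcomm 2 4 1 4 (by decide) (by decide) (by decide)))
    rw [hyy]; exact G
  have G2 := G'
  rw [← E6c, ← E5c', ← E4c] at G2
  simp only [mul_assoc] at G2
  have Main2 : c 0 * (c 1 * (c 2 * (c 3 * (c 4 * (p 1 3 * (p 0 2 * (p 3 1 * (p 2 0)))))))) = 1 :=
    C2.symm.trans G2
  have R2 : c 0 * (c 1 * (c 2 * (c 3 * (c 4 * (p 1 3 * (p 0 2 * (p 3 1))))))) = p 0 2 := by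
    have h := congrArg (· * p 0 2) Main2
    simp only [mul_assoc, one_mul] at h
    calc c 0 * (c 1 * (c 2 * (c 3 * (c 4 * (p 1 3 * (p 0 2 * (p 3 1)))))))
      _ = c 0 * (c 1 * (c 2 * (c 3 * (c 4 * (p 1 3 * (p 0 2 * (p 3 1 * (p 2 0 * (p 0 2))))))))) := by
          rw [show p 3 1 * (p 2 0 * (p 0 2)) = p 3 1 from cne (hcan 2 0 (by decide)) (p 3 1)]
      _ = p 0 2 := h
  have R1 : c 0 * (c 1 * (c 2 * (c 3 * (c 4 * (p 1 3 * (p 2 0 * (p 3 1))))))) = p 2 0 := by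
    have h := congrArg (· * p 2 0) Main1
    simp only [mul_assoc, one_mul] at h
    calc c 0 * (c 1 * (c 2 * (c 3 * (c 4 * (p 1 3 * (p 2 0 * (p 3 1)))))))
      _ = c 0 * (c 1 * (c 2 * (c 3 * (c 4 * (p 1 3 * (p 2 0 * (p 3 1 * (p 0 2 * (p 2 0))))))))) := by
          rw [show p 3 1 * (p 0 2 * (p 2 0)) = p 3 1 from cne (hcan 0 2 (by decide)) (p 3 1)]
      _ = p 2 0 := h
  have hF := congrArg₂ (· * ·) R2 R1
  simp only [mul_assoc] at hF
  rw [hcan 0 2 (by decide)] at hF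
  exact Fchain.symm.trans hF

private lemma rootOfUnity_prim {d : ℕ} (hd : d ≠ 0) : IsPrimitiveRoot (rootOfUnity d) d :=
  Complex.isPrimitiveRoot_exp d hd

private lemma rootOfUnity_pow_d {d : ℕ} (hd : d ≠ 0) : rootOfUnity d ^ d = 1 :=
  (rootOfUnity_prim hd).pow_eq_one

private lemma pow_val_mul {E : Type*} [Monoid E] {d : ℕ} [NeZero d] {A : E} (hA : A ^ d = 1)
    (α β : ZMod d) : (A ^ α.val) ^ β.val = A ^ (α * β).val := by
  rw [← pow_mul, ZMod.val_mul]
  conv_lhs => rw [← Nat.div_add_mod (α.val * β.val) d, pow_add, pow_mul, hA, one_pow, one_mul]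

private lemma pow_natCast_val {E : Type*} [Monoid E] {d : ℕ} [NeZero d] {A : E} (hA : A ^ d = 1)
    (k : ℕ) : A ^ k = A ^ ((k : ZMod d)).val := by
  rw [ZMod.val_natCast]
  conv_lhs => rw [← Nat.div_add_mod k d, pow_add, pow_mul, hA, one_pow, one_mul]

private lemma pow_add_val_eq_one {E : Type*} [Monoid E] {d : ℕ} [NeZero d] {A : E} (hA : A ^ d = 1)
    {α β : ZMod d} (h : α + β = 0) : A ^ α.val * A ^ β.val = 1 := by
  rw [← pow_add, pow_natCast_val hA]
  push_cast
  rw [ZMod.natCast_val, ZMod.natCast_val, ZMod.cast_id, ZMod.cast_id, h, ZMod.val_zero, pow_zero]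

private lemma exists_mulVec_eq_of_dual {K : Type*} [Field K] {m n : ℕ}
    (M : Matrix (Fin m) (Fin n) K) (b : Fin m → K)
    (h : ∀ y, Matrix.vecMul y M = 0 → dotProduct y b = 0) :
    ∃ x, M.mulVec x = b := by
  by_contra hcon
  push_neg at hcon
  have hb : b ∉ LinearMap.range (Matrix.mulVecLin M) := by
    simp only [LinearMap.mem_range, Matrix.mulVecLin_apply]
    exact fun ⟨x, hx⟩ => hcon x hx
  obtain ⟨f, hfb, hfp⟩ := Submodule.exists_dual_map_eq_bot_of_notMem hb inferInstance
  set y : Fin m → K := fun u => f (Pi.single u 1) with hy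
  have hfy : ∀ v : Fin m → K, f v = dotProduct y v := by
    intro v
    rw [LinearMap.pi_apply_eq_sum_univ f v, dotProduct]
    refine Finset.sum_congr rfl fun i _ => ?_
    rw [hy, smul_eq_mul, mul_comm]
    congr 2
    funext j
    simp [Pi.single_apply, eq_comm]
  have hker : ∀ x, f (M.mulVec x) = 0 := by
    intro x
    have hmem : M.mulVec x ∈ LinearMap.range (Matrix.mulVecLin M) :=
      ⟨x, Matrix.mulVecLin_apply M x⟩
    have hm : f (M.mulVec x) ∈ Submodule.map f (LinearMap.range (Matrix.mulVecLin M)) :=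
      Submodule.mem_map_of_mem hmem
    rw [hfp] at hm
    simpa using hm
  have hyM : Matrix.vecMul y M = 0 := by
    funext j
    have h1 : M.mulVec (Pi.single j 1) = fun i => M i j := by
      funext i
      simp [Matrix.mulVec_single]
    have h2 := hker (Pi.single j 1)
    rw [h1, hfy] at h2
    simpa [Matrix.vecMul, dotProduct] using h2
  exact hfb (by rw [hfy]; exact h y hyM)

private def ec : Fin 5 → Fin 5 → Fin 10 :=
  ![![0,0,1,2,3],![0,0,4,5,6],![1,4,0,7,8],![2,5,7,0,9],![3,6,8,9,0]]

private lemma smul_one_eq_one_iff {H : Type} [NormedAddCommGroup H] [InnerProductSpace ℂ H]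
    [Nontrivial H] {cc : ℂ} (h : cc • (1 : H →L[ℂ] H) = 1) : cc = 1 := by
  obtain ⟨v, hv⟩ := exists_ne (0 : H)
  have h2 := congrArg (fun φ : H →L[ℂ] H => φ v) h
  simp only [ContinuousLinearMap.smul_apply, ContinuousLinearMap.one_apply] at h2
  have h3 : (cc - 1) • v = 0 := by rw [sub_smul, h2, one_smul, sub_self]
  rcases smul_eq_zero.mp h3 with h4 | h4
  · exact sub_eq_zero.mp h4
  · exact absurd h4 hv

end MagicPentagramProof

set_option maxHeartbeats 4000000 in
/-- for `d > 2` prime, a magic-pentagram-form LCS over `ℤ_d` with all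
coefficients nonzero admits a quantum solution on some nonzero complex Hilbert space iff
it has a classical solution. -/
theorem magicPentagram_quantum_iff_classical (d : ℕ) (hd : d.Prime) (hd2 : 2 < d)
    (a a' : Fin 10 → ZMod d) (ha : ∀ i, a i ≠ 0) (ha' : ∀ i, a' i ≠ 0)
    (b : Fin 5 → ZMod d) :
    HasQuantumSolution d (magicPentagramMatrix a a') b ↔
      ∃ x : Fin 10 → ZMod d, (magicPentagramMatrix a a').mulVec x = b := by
  haveI : NeZero d := ⟨hd.ne_zero⟩
  haveI : Fact d.Prime := ⟨hd⟩
  have hωd : rootOfUnity d ^ d = 1 := rootOfUnity_pow_d hd.ne_zero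
  constructor
  · rintro ⟨H, _inst1, _inst2, _inst3, _inst4, A, hAord, hAcomm, hArow⟩
    apply exists_mulVec_eq_of_dual
    intro y hy
    have hcol : ∀ j : Fin 10, y 0 * magicPentagramMatrix a a' 0 j + y 1 * magicPentagramMatrix a a' 1 j + y 2 * magicPentagramMatrix a a' 2 j + y 3 * magicPentagramMatrix a a' 3 j + y 4 * magicPentagramMatrix a a' 4 j = 0 := by
      intro j
      have h := congrFun hy j
      simp only [Matrix.vecMul, dotProduct, Fin.sum_univ_five, Pi.zero_apply] at h
      linear_combination h
    have hq0 : y 0 * a 0 + y 1 * a' 0 = 0 := by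
      have h := hcol 0
      simp only [show magicPentagramMatrix a a' 0 0 = (a 0 : ZMod d) from rfl, show magicPentagramMatrix a a' 1 0 = (a' 0 : ZMod d) from rfl, show magicPentagramMatrix a a' 2 0 = (0 : ZMod d) from rfl, show magicPentagramMatrix a a' 3 0 = (0 : ZMod d) from rfl, show magicPentagramMatrix a a' 4 0 = (0 : ZMod d) from rfl, mul_zero, add_zero, zero_add] at h
      linear_combination h
    have hq1 : y 0 * a 1 + y 2 * a' 1 = 0 := by
      have h := hcol 1
      simp only [show magicPentagramMatrix a a' 0 1 = (a 1 : ZMod d) from rfl, show magicPentagramMatrix a a' 1 1 = (0 : ZMod d) from rfl, show magicPentagramMatrix a a' 2 1 = (a' 1 : ZMod d) from rfl, show magicPentagramMatrix a a' 3 1 = (0 : ZMod d) from rfl, show magicPentagramMatrix a a' 4 1 = (0 : ZMod d) from rfl, mul_zero, add_zero, zero_add] at h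
      linear_combination h
    have hq2 : y 0 * a 2 + y 3 * a' 2 = 0 := by
      have h := hcol 2
      simp only [show magicPentagramMatrix a a' 0 2 = (a 2 : ZMod d) from rfl, show magicPentagramMatrix a a' 1 2 = (0 : ZMod d) from rfl, show magicPentagramMatrix a a' 2 2 = (0 : ZMod d) from rfl, show magicPentagramMatrix a a' 3 2 = (a' 2 : ZMod d) from rfl, show magicPentagramMatrix a a' 4 2 = (0 : ZMod d) from rfl, mul_zero, add_zero, zero_add] at h
      linear_combination h
    have hq3 : y 0 * a 3 + y 4 * a' 3 = 0 := by
      have h := hcol 3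
      simp only [show magicPentagramMatrix a a' 0 3 = (a 3 : ZMod d) from rfl, show magicPentagramMatrix a a' 1 3 = (0 : ZMod d) from rfl, show magicPentagramMatrix a a' 2 3 = (0 : ZMod d) from rfl, show magicPentagramMatrix a a' 3 3 = (0 : ZMod d) from rfl, show magicPentagramMatrix a a' 4 3 = (a' 3 : ZMod d) from rfl, mul_zero, add_zero, zero_add] at h
      linear_combination h
    have hq4 : y 1 * a 4 + y 2 * a' 4 = 0 := by
      have h := hcol 4
      simp only [show magicPentagramMatrix a a' 0 4 = (0 : ZMod d) from rfl, show magicPentagramMatrix a a' 1 4 = (a 4 : ZMod d) from rfl, show magicPentagramMatrix a a' 2 4 = (a' 4 : ZMod d) from rfl, show magicPentagramMatrix a a' 3 4 = (0 : ZMod d) from rfl, show magicPentagramMatrix a a' 4 4 = (0 : ZMod d) from rfl, mul_zero, add_zero, zero_add] at h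
      linear_combination h
    have hq5 : y 1 * a 5 + y 3 * a' 5 = 0 := by
      have h := hcol 5
      simp only [show magicPentagramMatrix a a' 0 5 = (0 : ZMod d) from rfl, show magicPentagramMatrix a a' 1 5 = (a 5 : ZMod d) from rfl, show magicPentagramMatrix a a' 2 5 = (0 : ZMod d) from rfl, show magicPentagramMatrix a a' 3 5 = (a' 5 : ZMod d) from rfl, show magicPentagramMatrix a a' 4 5 = (0 : ZMod d) from rfl, mul_zero, add_zero, zero_add] at h
      linear_combination h
    have hq6 : y 1 * a 6 + y 4 * a' 6 = 0 := by
      have h := hcol 6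
      simp only [show magicPentagramMatrix a a' 0 6 = (0 : ZMod d) from rfl, show magicPentagramMatrix a a' 1 6 = (a 6 : ZMod d) from rfl, show magicPentagramMatrix a a' 2 6 = (0 : ZMod d) from rfl, show magicPentagramMatrix a a' 3 6 = (0 : ZMod d) from rfl, show magicPentagramMatrix a a' 4 6 = (a' 6 : ZMod d) from rfl, mul_zero, add_zero, zero_add] at h
      linear_combination h
    have hq7 : y 2 * a 7 + y 3 * a' 7 = 0 := by
      have h := hcol 7
      simp only [show magicPentagramMatrix a a' 0 7 = (0 : ZMod d) from rfl, show magicPentagramMatrix a a' 1 7 = (0 : ZMod d) from rfl, show magicPentagramMatrix a a' 2 7 = (a 7 : ZMod d) from rfl, show magicPentagramMatrix a a' 3 7 = (a' 7 : ZMod d) from rfl, show magicPentagramMatrix a a' 4 7 = (0 : ZMod d) from rfl, mul_zero, add_zero, zero_add] at h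
      linear_combination h
    have hq8 : y 2 * a 8 + y 4 * a' 8 = 0 := by
      have h := hcol 8
      simp only [show magicPentagramMatrix a a' 0 8 = (0 : ZMod d) from rfl, show magicPentagramMatrix a a' 1 8 = (0 : ZMod d) from rfl, show magicPentagramMatrix a a' 2 8 = (a 8 : ZMod d) from rfl, show magicPentagramMatrix a a' 3 8 = (0 : ZMod d) from rfl, show magicPentagramMatrix a a' 4 8 = (a' 8 : ZMod d) from rfl, mul_zero, add_zero, zero_add] at h
      linear_combination h
    have hq9 : y 3 * a 9 + y 4 * a' 9 = 0 := by
      have h := hcol 9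
      simp only [show magicPentagramMatrix a a' 0 9 = (0 : ZMod d) from rfl, show magicPentagramMatrix a a' 1 9 = (0 : ZMod d) from rfl, show magicPentagramMatrix a a' 2 9 = (0 : ZMod d) from rfl, show magicPentagramMatrix a a' 3 9 = (a 9 : ZMod d) from rfl, show magicPentagramMatrix a a' 4 9 = (a' 9 : ZMod d) from rfl, mul_zero, add_zero, zero_add] at h
      linear_combination h
    have k01 : A 0 ^ ((a 0 * y 0).val) * A 0 ^ ((a' 0 * y 1).val) = 1 :=
      pow_add_val_eq_one (hAord 0) (by linear_combination hq0)
    have k10 : A 0 ^ ((a' 0 * y 1).val) * A 0 ^ ((a 0 * y 0).val) = 1 :=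
      pow_add_val_eq_one (hAord 0) (by linear_combination hq0)
    have k02 : A 1 ^ ((a 1 * y 0).val) * A 1 ^ ((a' 1 * y 2).val) = 1 :=
      pow_add_val_eq_one (hAord 1) (by linear_combination hq1)
    have k20 : A 1 ^ ((a' 1 * y 2).val) * A 1 ^ ((a 1 * y 0).val) = 1 :=
      pow_add_val_eq_one (hAord 1) (by linear_combination hq1)
    have k03 : A 2 ^ ((a 2 * y 0).val) * A 2 ^ ((a' 2 * y 3).val) = 1 :=
      pow_add_val_eq_one (hAord 2) (by linear_combination hq2)
    have k30 : A 2 ^ ((a' 2 * y 3).val) * A 2 ^ ((a 2 * y 0).val) = 1 :=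
      pow_add_val_eq_one (hAord 2) (by linear_combination hq2)
    have k04 : A 3 ^ ((a 3 * y 0).val) * A 3 ^ ((a' 3 * y 4).val) = 1 :=
      pow_add_val_eq_one (hAord 3) (by linear_combination hq3)
    have k40 : A 3 ^ ((a' 3 * y 4).val) * A 3 ^ ((a 3 * y 0).val) = 1 :=
      pow_add_val_eq_one (hAord 3) (by linear_combination hq3)
    have k12 : A 4 ^ ((a 4 * y 1).val) * A 4 ^ ((a' 4 * y 2).val) = 1 :=
      pow_add_val_eq_one (hAord 4) (by linear_combination hq4)
    have k21 : A 4 ^ ((a' 4 * y 2).val) * A 4 ^ ((a 4 * y 1).val) = 1 :=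
      pow_add_val_eq_one (hAord 4) (by linear_combination hq4)
    have k13 : A 5 ^ ((a 5 * y 1).val) * A 5 ^ ((a' 5 * y 3).val) = 1 :=
      pow_add_val_eq_one (hAord 5) (by linear_combination hq5)
    have k31 : A 5 ^ ((a' 5 * y 3).val) * A 5 ^ ((a 5 * y 1).val) = 1 :=
      pow_add_val_eq_one (hAord 5) (by linear_combination hq5)
    have k14 : A 6 ^ ((a 6 * y 1).val) * A 6 ^ ((a' 6 * y 4).val) = 1 :=
      pow_add_val_eq_one (hAord 6) (by linear_combination hq6)
    have k41 : A 6 ^ ((a' 6 * y 4).val) * A 6 ^ ((a 6 * y 1).val) = 1 :=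
      pow_add_val_eq_one (hAord 6) (by linear_combination hq6)
    have k23 : A 7 ^ ((a 7 * y 2).val) * A 7 ^ ((a' 7 * y 3).val) = 1 :=
      pow_add_val_eq_one (hAord 7) (by linear_combination hq7)
    have k32 : A 7 ^ ((a' 7 * y 3).val) * A 7 ^ ((a 7 * y 2).val) = 1 :=
      pow_add_val_eq_one (hAord 7) (by linear_combination hq7)
    have k24 : A 8 ^ ((a 8 * y 2).val) * A 8 ^ ((a' 8 * y 4).val) = 1 :=
      pow_add_val_eq_one (hAord 8) (by linear_combination hq8)
    have k42 : A 8 ^ ((a' 8 * y 4).val) * A 8 ^ ((a 8 * y 2).val) = 1 :=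
      pow_add_val_eq_one (hAord 8) (by linear_combination hq8)
    have k34 : A 9 ^ ((a 9 * y 3).val) * A 9 ^ ((a' 9 * y 4).val) = 1 :=
      pow_add_val_eq_one (hAord 9) (by linear_combination hq9)
    have k43 : A 9 ^ ((a' 9 * y 4).val) * A 9 ^ ((a 9 * y 3).val) = 1 :=
      pow_add_val_eq_one (hAord 9) (by linear_combination hq9)
    have hcan : ∀ u v : Fin 5, u ≠ v →
        A (ec u v) ^ ((magicPentagramMatrix a a' u (ec u v) * y u).val) * A (ec v u) ^ ((magicPentagramMatrix a a' v (ec v u) * y v).val) = 1 := by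
      intro u v huv
      fin_cases u <;> fin_cases v
      · exact absurd rfl huv
      · exact k01
      · exact k02
      · exact k03
      · exact k04
      · exact k10
      · exact absurd rfl huv
      · exact k12
      · exact k13
      · exact k14
      · exact k20
      · exact k21
      · exact absurd rfl huv
      · exact k23
      · exact k24
      · exact k30
      · exact k31
      · exact k32
      · exact absurd rfl huv
      · exact k34
      · exact k40
      · exact k41
      · exact k42
      · exact k43
      · exact absurd rfl huv
    have hnz1 : ∀ u v : Fin 5, u ≠ v → magicPentagramMatrix a a' u (ec u v) ≠ 0 := by
      intro u v huv
      fin_cases u <;> fin_cases v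
      · exact absurd rfl huv
      · exact (ha 0 : magicPentagramMatrix a a' 0 0 ≠ 0)
      · exact (ha 1 : magicPentagramMatrix a a' 0 1 ≠ 0)
      · exact (ha 2 : magicPentagramMatrix a a' 0 2 ≠ 0)
      · exact (ha 3 : magicPentagramMatrix a a' 0 3 ≠ 0)
      · exact (ha' 0 : magicPentagramMatrix a a' 1 0 ≠ 0)
      · exact absurd rfl huv
      · exact (ha 4 : magicPentagramMatrix a a' 1 4 ≠ 0)
      · exact (ha 5 : magicPentagramMatrix a a' 1 5 ≠ 0)
      · exact (ha 6 : magicPentagramMatrix a a' 1 6 ≠ 0)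
      · exact (ha' 1 : magicPentagramMatrix a a' 2 1 ≠ 0)
      · exact (ha' 4 : magicPentagramMatrix a a' 2 4 ≠ 0)
      · exact absurd rfl huv
      · exact (ha 7 : magicPentagramMatrix a a' 2 7 ≠ 0)
      · exact (ha 8 : magicPentagramMatrix a a' 2 8 ≠ 0)
      · exact (ha' 2 : magicPentagramMatrix a a' 3 2 ≠ 0)
      · exact (ha' 5 : magicPentagramMatrix a a' 3 5 ≠ 0)
      · exact (ha' 7 : magicPentagramMatrix a a' 3 7 ≠ 0)
      · exact absurd rfl huv
      · exact (ha 9 : magicPentagramMatrix a a' 3 9 ≠ 0)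
      · exact (ha' 3 : magicPentagramMatrix a a' 4 3 ≠ 0)
      · exact (ha' 6 : magicPentagramMatrix a a' 4 6 ≠ 0)
      · exact (ha' 8 : magicPentagramMatrix a a' 4 8 ≠ 0)
      · exact (ha' 9 : magicPentagramMatrix a a' 4 9 ≠ 0)
      · exact absurd rfl huv
    have hnz2 : ∀ u v : Fin 5, u ≠ v → magicPentagramMatrix a a' v (ec u v) ≠ 0 := by
      intro u v huv
      fin_cases u <;> fin_cases v
      · exact absurd rfl huv
      · exact (ha' 0 : magicPentagramMatrix a a' 1 0 ≠ 0)
      · exact (ha' 1 : magicPentagramMatrix a a' 2 1 ≠ 0)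
      · exact (ha' 2 : magicPentagramMatrix a a' 3 2 ≠ 0)
      · exact (ha' 3 : magicPentagramMatrix a a' 4 3 ≠ 0)
      · exact (ha 0 : magicPentagramMatrix a a' 0 0 ≠ 0)
      · exact absurd rfl huv
      · exact (ha' 4 : magicPentagramMatrix a a' 2 4 ≠ 0)
      · exact (ha' 5 : magicPentagramMatrix a a' 3 5 ≠ 0)
      · exact (ha' 6 : magicPentagramMatrix a a' 4 6 ≠ 0)
      · exact (ha 1 : magicPentagramMatrix a a' 0 1 ≠ 0)
      · exact (ha 4 : magicPentagramMatrix a a' 1 4 ≠ 0)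
      · exact absurd rfl huv
      · exact (ha' 7 : magicPentagramMatrix a a' 3 7 ≠ 0)
      · exact (ha' 8 : magicPentagramMatrix a a' 4 8 ≠ 0)
      · exact (ha 2 : magicPentagramMatrix a a' 0 2 ≠ 0)
      · exact (ha 5 : magicPentagramMatrix a a' 1 5 ≠ 0)
      · exact (ha 7 : magicPentagramMatrix a a' 2 7 ≠ 0)
      · exact absurd rfl huv
      · exact (ha' 9 : magicPentagramMatrix a a' 4 9 ≠ 0)
      · exact (ha 3 : magicPentagramMatrix a a' 0 3 ≠ 0)
      · exact (ha 6 : magicPentagramMatrix a a' 1 6 ≠ 0)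
      · exact (ha 8 : magicPentagramMatrix a a' 2 8 ≠ 0)
      · exact (ha 9 : magicPentagramMatrix a a' 3 9 ≠ 0)
      · exact absurd rfl huv
    have hrow0 : A 0 ^ ((magicPentagramMatrix a a' 0 0 * y 0).val) * (A 1 ^ ((magicPentagramMatrix a a' 0 1 * y 0).val) * (A 2 ^ ((magicPentagramMatrix a a' 0 2 * y 0).val) * A 3 ^ ((magicPentagramMatrix a a' 0 3 * y 0).val))) = rootOfUnity d ^ (b 0 * y 0).val • (1 : H →L[ℂ] H) := by
      have h := hArow 0
      rw [show (List.ofFn fun j => A j ^ ((magicPentagramMatrix a a' 0 j).val)) = [A 0 ^ ((magicPentagramMatrix a a' 0 0).val), A 1 ^ ((magicPentagramMatrix a a' 0 1).val), A 2 ^ ((magicPentagramMatrix a a' 0 2).val), A 3 ^ ((magicPentagramMatrix a a' 0 3).val), A 4 ^ ((magicPentagramMatrix a a' 0 4).val), A 5 ^ ((magicPentagramMatrix a a' 0 5).val), A 6 ^ ((magicPentagramMatrix a a' 0 6).val), A 7 ^ ((magicPentagramMatrix a a' 0 7).val), A 8 ^ ((magicPentagramMatrix a a' 0 8).val), A 9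 ^ ((magicPentagramMatrix a a' 0 9).val)] from rfl] at h
      simp only [List.prod_cons, List.prod_nil, mul_one] at h
      simp only [show magicPentagramMatrix a a' 0 4 = (0 : ZMod d) from rfl, show magicPentagramMatrix a a' 0 5 = (0 : ZMod d) from rfl, show magicPentagramMatrix a a' 0 6 = (0 : ZMod d) from rfl, show magicPentagramMatrix a a' 0 7 = (0 : ZMod d) from rfl, show magicPentagramMatrix a a' 0 8 = (0 : ZMod d) from rfl, show magicPentagramMatrix a a' 0 9 = (0 : ZMod d) from rfl, ZMod.val_zero, pow_zero, one_mul, mul_one] at h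
      have h2 : (A 0 ^ ((magicPentagramMatrix a a' 0 0).val) * (A 1 ^ ((magicPentagramMatrix a a' 0 1).val) * (A 2 ^ ((magicPentagramMatrix a a' 0 2).val) * A 3 ^ ((magicPentagramMatrix a a' 0 3).val)))) ^ (y 0).val = (rootOfUnity d ^ (b 0).val • (1 : H →L[ℂ] H)) ^ (y 0).val := by rw [h]
      rw [pow4 (y 0).val ((hAcomm 0 1 ⟨0, (ha 0 : magicPentagramMatrix a a' 0 0 ≠ 0), (ha 1 : magicPentagramMatrix a a' 0 1 ≠ 0)⟩).pow_pow _ _) ((hAcomm 0 2 ⟨0, (ha 0 : magicPentagramMatrix a a' 0 0 ≠ 0), (ha 2 : magicPentagramMatrix a a' 0 2 ≠ 0)⟩).pow_pow _ _) ((hAcomm 0 3 ⟨0, (ha 0 : magicPentagramMatrix a a' 0 0 ≠ 0), (ha 3 : magicPentagramMatrix a a' 0 3 ≠ 0)⟩).pow_pow _ _) ((hAcomm 1 2 ⟨0, (ha 1 : magicPentagramMatrix a a' 0 1 ≠ 0), (ha 2 : magicPentagramMatrix a a' 0 2 ≠ 0)⟩).pow_pow _ _) ((hAcomm 1 3 ⟨0,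 (ha 1 : magicPentagramMatrix a a' 0 1 ≠ 0), (ha 3 : magicPentagramMatrix a a' 0 3 ≠ 0)⟩).pow_pow _ _) ((hAcomm 2 3 ⟨0, (ha 2 : magicPentagramMatrix a a' 0 2 ≠ 0), (ha 3 : magicPentagramMatrix a a' 0 3 ≠ 0)⟩).pow_pow _ _)] at h2
      rw [pow_val_mul (hAord 0), pow_val_mul (hAord 1), pow_val_mul (hAord 2), pow_val_mul (hAord 3), smul_pow, one_pow, pow_val_mul hωd] at h2
      exact h2
    have hrow1 : A 0 ^ ((magicPentagramMatrix a a' 1 0 * y 1).val) * (A 4 ^ ((magicPentagramMatrix a a' 1 4 * y 1).val) * (A 5 ^ ((magicPentagramMatrix a a' 1 5 * y 1).val) * A 6 ^ ((magicPentagramMatrix a a' 1 6 * y 1).val))) = rootOfUnity d ^ (b 1 * y 1).val • (1 : H →L[ℂ] H) := by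
      have h := hArow 1
      rw [show (List.ofFn fun j => A j ^ ((magicPentagramMatrix a a' 1 j).val)) = [A 0 ^ ((magicPentagramMatrix a a' 1 0).val), A 1 ^ ((magicPentagramMatrix a a' 1 1).val), A 2 ^ ((magicPentagramMatrix a a' 1 2).val), A 3 ^ ((magicPentagramMatrix a a' 1 3).val), A 4 ^ ((magicPentagramMatrix a a' 1 4).val), A 5 ^ ((magicPentagramMatrix a a' 1 5).val), A 6 ^ ((magicPentagramMatrix a a' 1 6).val), A 7 ^ ((magicPentagramMatrix a a' 1 7).val), A 8 ^ ((magicPentagramMatrix a a' 1 8).val), A 9 ^ ((magicPentagramMatrix a a' 1 9).val)] from rfl] at h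
      simp only [List.prod_cons, List.prod_nil, mul_one] at h
      simp only [show magicPentagramMatrix a a' 1 1 = (0 : ZMod d) from rfl, show magicPentagramMatrix a a' 1 2 = (0 : ZMod d) from rfl, show magicPentagramMatrix a a' 1 3 = (0 : ZMod d) from rfl, show magicPentagramMatrix a a' 1 7 = (0 : ZMod d) from rfl, show magicPentagramMatrix a a' 1 8 = (0 : ZMod d) from rfl, show magicPentagramMatrix a a' 1 9 = (0 : ZMod d) from rfl, ZMod.val_zero, pow_zero, one_mul, mul_one] at h
      have h2 : (A 0 ^ ((magicPentagramMatrix a a' 1 0).val) * (A 4 ^ ((magicPentagramMatrix a a' 1 4).val) * (A 5 ^ ((magicPentagramMatrix a a' 1 5).val) * A 6 ^ ((magicPentagramMatrix a a' 1 6).val)))) ^ (y 1).val = (rootOfUnity d ^ (b 1).val • (1 : H →L[ℂ] H)) ^ (y 1).val := by rw [h]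
      rw [pow4 (y 1).val ((hAcomm 0 4 ⟨1, (ha' 0 : magicPentagramMatrix a a' 1 0 ≠ 0), (ha 4 : magicPentagramMatrix a a' 1 4 ≠ 0)⟩).pow_pow _ _) ((hAcomm 0 5 ⟨1, (ha' 0 : magicPentagramMatrix a a' 1 0 ≠ 0), (ha 5 : magicPentagramMatrix a a' 1 5 ≠ 0)⟩).pow_pow _ _) ((hAcomm 0 6 ⟨1, (ha' 0 : magicPentagramMatrix a a' 1 0 ≠ 0), (ha 6 : magicPentagramMatrix a a' 1 6 ≠ 0)⟩).pow_pow _ _) ((hAcomm 4 5 ⟨1, (ha 4 : magicPentagramMatrix a a' 1 4 ≠ 0), (ha 5 : magicPentagramMatrix a a' 1 5 ≠ 0)⟩).pow_pow _ _) ((hAcomm 4 6 ⟨1, (ha 4 : magicPentagramMatrix a a' 1 4 ≠ 0), (ha 6 : magicPentagramMatrix a a' 1 6 ≠ 0)⟩).pow_pow _ _) ((hAcomm 5 6 ⟨1, (ha 5 : magicPentagramMatrix a a' 1 5 ≠ 0), (ha 6 : magicPentagramMatrix a a' 1 6 ≠ 0)⟩).pow_pow _ _)] at h2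
      rw [pow_val_mul (hAord 0), pow_val_mul (hAord 4), pow_val_mul (hAord 5), pow_val_mul (hAord 6), smul_pow, one_pow, pow_val_mul hωd] at h2
      exact h2
    have hrow2 : A 1 ^ ((magicPentagramMatrix a a' 2 1 * y 2).val) * (A 4 ^ ((magicPentagramMatrix a a' 2 4 * y 2).val) * (A 7 ^ ((magicPentagramMatrix a a' 2 7 * y 2).val) * A 8 ^ ((magicPentagramMatrix a a' 2 8 * y 2).val))) = rootOfUnity d ^ (b 2 * y 2).val • (1 : H →L[ℂ] H) := by
      have h := hArow 2
      rw [show (List.ofFn fun j => A j ^ ((magicPentagramMatrix a a' 2 j).val)) = [A 0 ^ ((magicPentagramMatrix a a' 2 0).val), A 1 ^ ((magicPentagramMatrix a a' 2 1).val), A 2 ^ ((magicPentagramMatrix a a' 2 2).val), A 3 ^ ((magicPentagramMatrix a a' 2 3).val), A 4 ^ ((magicPentagramMatrix a a' 2 4).val), A 5 ^ ((magicPentagramMatrix a a' 2 5).val), A 6 ^ ((magicPentagramMatrix a a' 2 6).val), A 7 ^ ((magicPentagramMatrix a a' 2 7).val), A 8 ^ ((magicPentagramMatrix a a' 2 8).val),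 A 9 ^ ((magicPentagramMatrix a a' 2 9).val)] from rfl] at h
      simp only [List.prod_cons, List.prod_nil, mul_one] at h
      simp only [show magicPentagramMatrix a a' 2 0 = (0 : ZMod d) from rfl, show magicPentagramMatrix a a' 2 2 = (0 : ZMod d) from rfl, show magicPentagramMatrix a a' 2 3 = (0 : ZMod d) from rfl, show magicPentagramMatrix a a' 2 5 = (0 : ZMod d) from rfl, show magicPentagramMatrix a a' 2 6 = (0 : ZMod d) from rfl, show magicPentagramMatrix a a' 2 9 = (0 : ZMod d) from rfl, ZMod.val_zero, pow_zero, one_mul, mul_one] at h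
      have h2 : (A 1 ^ ((magicPentagramMatrix a a' 2 1).val) * (A 4 ^ ((magicPentagramMatrix a a' 2 4).val) * (A 7 ^ ((magicPentagramMatrix a a' 2 7).val) * A 8 ^ ((magicPentagramMatrix a a' 2 8).val)))) ^ (y 2).val = (rootOfUnity d ^ (b 2).val • (1 : H →L[ℂ] H)) ^ (y 2).val := by rw [h]
      rw [pow4 (y 2).val ((hAcomm 1 4 ⟨2, (ha' 1 : magicPentagramMatrix a a' 2 1 ≠ 0), (ha' 4 : magicPentagramMatrix a a' 2 4 ≠ 0)⟩).pow_pow _ _) ((hAcomm 1 7 ⟨2, (ha' 1 : magicPentagramMatrix a a' 2 1 ≠ 0), (ha 7 : magicPentagramMatrix a a' 2 7 ≠ 0)⟩).pow_pow _ _) ((hAcomm 1 8 ⟨2, (ha' 1 : magicPentagramMatrix a a' 2 1 ≠ 0), (ha 8 : magicPentagramMatrix a a' 2 8 ≠ 0)⟩).pow_pow _ _) ((hAcomm 4 7 ⟨2, (ha' 4 : magicPentagramMatrix a a' 2 4 ≠ 0), (ha 7 : magicPentagramMatrix a a' 2 7 ≠ 0)⟩).pow_pow _ _) ((hAcomm 4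 8 ⟨2, (ha' 4 : magicPentagramMatrix a a' 2 4 ≠ 0), (ha 8 : magicPentagramMatrix a a' 2 8 ≠ 0)⟩).pow_pow _ _) ((hAcomm 7 8 ⟨2, (ha 7 : magicPentagramMatrix a a' 2 7 ≠ 0), (ha 8 : magicPentagramMatrix a a' 2 8 ≠ 0)⟩).pow_pow _ _)] at h2
      rw [pow_val_mul (hAord 1), pow_val_mul (hAord 4), pow_val_mul (hAord 7), pow_val_mul (hAord 8), smul_pow, one_pow, pow_val_mul hωd] at h2
      exact h2
    have hrow3 : A 2 ^ ((magicPentagramMatrix a a' 3 2 * y 3).val) * (A 5 ^ ((magicPentagramMatrix a a' 3 5 * y 3).val) * (A 7 ^ ((magicPentagramMatrix a a' 3 7 * y 3).val) * A 9 ^ ((magicPentagramMatrix a a' 3 9 * y 3).val))) = rootOfUnity d ^ (b 3 * y 3).val • (1 : H →L[ℂ] H) := by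
      have h := hArow 3
      rw [show (List.ofFn fun j => A j ^ ((magicPentagramMatrix a a' 3 j).val)) = [A 0 ^ ((magicPentagramMatrix a a' 3 0).val), A 1 ^ ((magicPentagramMatrix a a' 3 1).val), A 2 ^ ((magicPentagramMatrix a a' 3 2).val), A 3 ^ ((magicPentagramMatrix a a' 3 3).val), A 4 ^ ((magicPentagramMatrix a a' 3 4).val), A 5 ^ ((magicPentagramMatrix a a' 3 5).val), A 6 ^ ((magicPentagramMatrix a a' 3 6).val), A 7 ^ ((magicPentagramMatrix a a' 3 7).val), A 8 ^ ((magicPentagramMatrix a a' 3 8).val), A 9 ^ ((magicPentagramMatrix a a' 3 9).val)] from rfl] at h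
      simp only [List.prod_cons, List.prod_nil, mul_one] at h
      simp only [show magicPentagramMatrix a a' 3 0 = (0 : ZMod d) from rfl, show magicPentagramMatrix a a' 3 1 = (0 : ZMod d) from rfl, show magicPentagramMatrix a a' 3 3 = (0 : ZMod d) from rfl, show magicPentagramMatrix a a' 3 4 = (0 : ZMod d) from rfl, show magicPentagramMatrix a a' 3 6 = (0 : ZMod d) from rfl, show magicPentagramMatrix a a' 3 8 = (0 : ZMod d) from rfl, ZMod.val_zero, pow_zero, one_mul, mul_one] at h
      have h2 : (A 2 ^ ((magicPentagramMatrix a a' 3 2).val) * (A 5 ^ ((magicPentagramMatrix a a' 3 5).val) * (A 7 ^ ((magicPentagramMatrix a a' 3 7).val) * A 9 ^ ((magicPentagramMatrix a a' 3 9).val)))) ^ (y 3).val = (rootOfUnity d ^ (b 3).val • (1 : H →L[ℂ] H)) ^ (y 3).val := by rw [h]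
      rw [pow4 (y 3).val ((hAcomm 2 5 ⟨3, (ha' 2 : magicPentagramMatrix a a' 3 2 ≠ 0), (ha' 5 : magicPentagramMatrix a a' 3 5 ≠ 0)⟩).pow_pow _ _) ((hAcomm 2 7 ⟨3, (ha' 2 : magicPentagramMatrix a a' 3 2 ≠ 0), (ha' 7 : magicPentagramMatrix a a' 3 7 ≠ 0)⟩).pow_pow _ _) ((hAcomm 2 9 ⟨3, (ha' 2 : magicPentagramMatrix a a' 3 2 ≠ 0), (ha 9 : magicPentagramMatrix a a' 3 9 ≠ 0)⟩).pow_pow _ _) ((hAcomm 5 7 ⟨3, (ha' 5 : magicPentagramMatrix a a' 3 5 ≠ 0), (ha' 7 : magicPentagramMatrix a a' 3 7 ≠ 0)⟩).pow_pow _ _) ((hAcomm 5 9 ⟨3, (ha' 5 : magicPentagramMatrix a a' 3 5 ≠ 0), (ha 9 : magicPentagramMatrix a a' 3 9 ≠ 0)⟩).pow_pow _ _) ((hAcomm 7 9 ⟨3, (ha' 7 : magicPentagramMatrix a a' 3 7 ≠ 0), (ha 9 : magicPentagramMatrix a a' 3 9 ≠ 0)⟩).pow_pow _ _)] at h2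
      rw [pow_val_mul (hAord 2), pow_val_mul (hAord 5), pow_val_mul (hAord 7), pow_val_mul (hAord 9), smul_pow, one_pow, pow_val_mul hωd] at h2
      exact h2
    have hrow4 : A 3 ^ ((magicPentagramMatrix a a' 4 3 * y 4).val) * (A 6 ^ ((magicPentagramMatrix a a' 4 6 * y 4).val) * (A 8 ^ ((magicPentagramMatrix a a' 4 8 * y 4).val) * A 9 ^ ((magicPentagramMatrix a a' 4 9 * y 4).val))) = rootOfUnity d ^ (b 4 * y 4).val • (1 : H →L[ℂ] H) := by
      have h := hArow 4
      rw [show (List.ofFn fun j => A j ^ ((magicPentagramMatrix a a' 4 j).val)) = [A 0 ^ ((magicPentagramMatrix a a' 4 0).val), A 1 ^ ((magicPentagramMatrix a a' 4 1).val), A 2 ^ ((magicPentagramMatrix a a' 4 2).val), A 3 ^ ((magicPentagramMatrix a a' 4 3).val), A 4 ^ ((magicPentagramMatrix a a' 4 4).val), A 5 ^ ((magicPentagramMatrix a a' 4 5).val), A 6 ^ ((magicPentagramMatrix a a' 4 6).val), A 7 ^ ((magicPentagramMatrix a a' 4 7).val), A 8 ^ ((magicPentagramMatrix a a' 4 8).val),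 A 9 ^ ((magicPentagramMatrix a a' 4 9).val)] from rfl] at h
      simp only [List.prod_cons, List.prod_nil, mul_one] at h
      simp only [show magicPentagramMatrix a a' 4 0 = (0 : ZMod d) from rfl, show magicPentagramMatrix a a' 4 1 = (0 : ZMod d) from rfl, show magicPentagramMatrix a a' 4 2 = (0 : ZMod d) from rfl, show magicPentagramMatrix a a' 4 4 = (0 : ZMod d) from rfl, show magicPentagramMatrix a a' 4 5 = (0 : ZMod d) from rfl, show magicPentagramMatrix a a' 4 7 = (0 : ZMod d) from rfl, ZMod.val_zero, pow_zero, one_mul, mul_one] at h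
      have h2 : (A 3 ^ ((magicPentagramMatrix a a' 4 3).val) * (A 6 ^ ((magicPentagramMatrix a a' 4 6).val) * (A 8 ^ ((magicPentagramMatrix a a' 4 8).val) * A 9 ^ ((magicPentagramMatrix a a' 4 9).val)))) ^ (y 4).val = (rootOfUnity d ^ (b 4).val • (1 : H →L[ℂ] H)) ^ (y 4).val := by rw [h]
      rw [pow4 (y 4).val ((hAcomm 3 6 ⟨4, (ha' 3 : magicPentagramMatrix a a' 4 3 ≠ 0), (ha' 6 : magicPentagramMatrix a a' 4 6 ≠ 0)⟩).pow_pow _ _) ((hAcomm 3 8 ⟨4, (ha' 3 : magicPentagramMatrix a a' 4 3 ≠ 0), (ha' 8 : magicPentagramMatrix a a' 4 8 ≠ 0)⟩).pow_pow _ _) ((hAcomm 3 9 ⟨4, (ha' 3 : magicPentagramMatrix a a' 4 3 ≠ 0), (ha' 9 : magicPentagramMatrix a a' 4 9 ≠ 0)⟩).pow_pow _ _) ((hAcomm 6 8 ⟨4, (ha' 6 : magicPentagramMatrix a a' 4 6 ≠ 0), (ha' 8 : magicPentagramMatrix a a' 4 8 ≠ 0)⟩).pow_pow _ _) ((hAcomm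 6 9 ⟨4, (ha' 6 : magicPentagramMatrix a a' 4 6 ≠ 0), (ha' 9 : magicPentagramMatrix a a' 4 9 ≠ 0)⟩).pow_pow _ _) ((hAcomm 8 9 ⟨4, (ha' 8 : magicPentagramMatrix a a' 4 8 ≠ 0), (ha' 9 : magicPentagramMatrix a a' 4 9 ≠ 0)⟩).pow_pow _ _)] at h2
      rw [pow_val_mul (hAord 3), pow_val_mul (hAord 6), pow_val_mul (hAord 8), pow_val_mul (hAord 9), smul_pow, one_pow, pow_val_mul hωd] at h2
      exact h2

    have hcomm : ∀ u v u' v' : Fin 5, u ≠ v → u' ≠ v' → (u = u' ∨ u = v' ∨ v = u' ∨ v = v') →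
        Commute (A (ec u v) ^ ((magicPentagramMatrix a a' u (ec u v) * y u).val))
          (A (ec u' v') ^ ((magicPentagramMatrix a a' u' (ec u' v') * y u').val)) := by
      intro u v u' v' huv hu'v' hsh
      apply Commute.pow_pow
      rcases hsh with h | h | h | h
      · subst h; exact hAcomm _ _ ⟨u, hnz1 u v huv, hnz1 u v' hu'v'⟩
      · subst h; exact hAcomm _ _ ⟨u, hnz1 u v huv, hnz2 u' u hu'v'⟩
      · subst h; exact hAcomm _ _ ⟨v, hnz2 u v huv, hnz1 v v' hu'v'⟩
      · subst h; exact hAcomm _ _ ⟨v, hnz2 u v huv, hnz2 u' v hu'v'⟩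
    have hc : ∀ (u : Fin 5) (g : H →L[ℂ] H),
        Commute ((rootOfUnity d ^ (b u * y u).val : ℂ) • (1 : H →L[ℂ] H)) g := by
      intro u g
      unfold Commute SemiconjBy
      rw [smul_mul_assoc, one_mul, mul_smul_comm, mul_one]
    have KEY := pentagram_core
      (fun u v => A (ec u v) ^ ((magicPentagramMatrix a a' u (ec u v) * y u).val))
      (fun u => (rootOfUnity d ^ (b u * y u).val : ℂ) • (1 : H →L[ℂ] H))
      hcan hcomm hc hrow0 hrow1 hrow2 hrow3 hrow4
    have collapse : ∀ r s : ℂ, (r • (1 : H →L[ℂ] H)) * (s • (1 : H →L[ℂ] H)) = (r * s) • 1 :=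
      fun r s => by rw [smul_mul_smul_comm, one_mul]
    have hKEY2 : (rootOfUnity d ^ (2 * ((b 0 * y 0).val + (b 1 * y 1).val + (b 2 * y 2).val +
        (b 3 * y 3).val + (b 4 * y 4).val))) • (1 : H →L[ℂ] H) = 1 := by
      have h := KEY
      simp only [collapse, ← pow_add] at h
      rw [show 2 * ((b 0 * y 0).val + (b 1 * y 1).val + (b 2 * y 2).val +
          (b 3 * y 3).val + (b 4 * y 4).val) = (b 0 * y 0).val + ((b 1 * y 1).val + ((b 2 * y 2).val + ((b 3 * y 3).val + ((b 4 * y 4).val + ((b 0 * y 0).val + ((b 1 * y 1).val + ((b 2 * y 2).val + ((b 3 * y 3).val + (b 4 * y 4).val)))))))) from by ring]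
      exact h
    have hpow := smul_one_eq_one_iff hKEY2
    have hdvd := ((rootOfUnity_prim hd.ne_zero).pow_eq_one_iff_dvd _).mp hpow
    have hdS : d ∣ ((b 0 * y 0).val + (b 1 * y 1).val + (b 2 * y 2).val +
        (b 3 * y 3).val + (b 4 * y 4).val) := by
      rcases (Nat.Prime.dvd_mul hd).mp hdvd with h2 | hS
      · exact absurd (Nat.le_of_dvd (by norm_num) h2) (by omega)
      · exact hS
    have hcast : (((b 0 * y 0).val + (b 1 * y 1).val + (b 2 * y 2).val +
        (b 3 * y 3).val + (b 4 * y 4).val : ℕ) : ZMod d) = 0 :=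
      (ZMod.natCast_eq_zero_iff _ d).mpr hdS
    push_cast [ZMod.natCast_val, ZMod.cast_id] at hcast
    show dotProduct y b = 0
    simp only [dotProduct, Fin.sum_univ_five]
    linear_combination hcast
  · rintro ⟨x, hx⟩
    refine ⟨ℂ, inferInstance, inferInstance, inferInstance, inferInstance,
      fun j => algebraMap ℂ (ℂ →L[ℂ] ℂ) (rootOfUnity d ^ (x j).val), ?_, ?_, ?_⟩
    · intro j
      rw [← map_pow, ← pow_mul, mul_comm ((x j).val) d, pow_mul, hωd, one_pow, map_one]
    · intro j k _
      exact Algebra.commutes _ _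
    · intro i
      have hxi : ((∑ j, (x j).val * (magicPentagramMatrix a a' i j).val : ℕ) : ZMod d) = b i := by
        push_cast [ZMod.natCast_val, ZMod.cast_id]
        have h := congrFun hx i
        simp only [Matrix.mulVec, dotProduct] at h
        rw [← h]
        exact Finset.sum_congr rfl fun j _ => mul_comm _ _
      calc (List.ofFn fun j => (algebraMap ℂ (ℂ →L[ℂ] ℂ) (rootOfUnity d ^ (x j).val)) ^ (magicPentagramMatrix a a' i j).val).prod
          = (List.ofFn fun j => (algebraMap ℂ (ℂ →L[ℂ] ℂ)) (rootOfUnity d ^ ((x j).val * (magicPentagramMatrix a a' i j).val))).prod := by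
            simp only [← map_pow, ← pow_mul]
        _ = ((List.ofFn fun j => rootOfUnity d ^ ((x j).val * (magicPentagramMatrix a a' i j).val)).map (algebraMap ℂ (ℂ →L[ℂ] ℂ))).prod := by
            rw [List.map_ofFn]
            rfl
        _ = algebraMap ℂ (ℂ →L[ℂ] ℂ) (∏ j, rootOfUnity d ^ ((x j).val * (magicPentagramMatrix a a' i j).val)) := by
            rw [← map_list_prod, List.prod_ofFn]
        _ = algebraMap ℂ (ℂ →L[ℂ] ℂ) (rootOfUnity d ^ (b i).val) := by
            rw [Finset.prod_pow_eq_pow_sum, pow_natCast_val hωd, hxi]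
        _ = rootOfUnity d ^ (b i).val • 1 := Algebra.algebraMap_eq_smul_one _
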